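/- arXiv:0903.0303 — 6 statements merged into one kernel-verified Lean document; each statement's English description precedes it below -/
import Mathlib

section
/- Let N be a positive integer and let π be a non-crossing partition of {1,...,N} (with the cyclic order) having α blocks. Then the number of indices k ∈ {1,...,N} such that k and k+1 (taken cyclically, so N+1 is identified with 1) belong to the same block of π is at least N − 2(α − 1). -/
open Classical

/-- `i` and `j` lie in the same block of the partition `P`. -/
def SameBlock {N : ℕ} (P : Finpartition (Finset.univ : Finset (Fin N))) (i j : Fin N) : Prop :=
  ∃ b ∈ P.parts, i ∈ b ∧ j ∈ b

/-- A partition of `[N]` is non-crossing if for `i < j < k < l`, `i ∼ k` and `j ∼ l`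
imply `i ∼ j` (this is equivalent for the linear and the cyclic order). -/
def IsNonCrossing {N : ℕ} (P : Finpartition (Finset.univ : Finset (Fin N))) : Prop :=
  ∀ i j k l : Fin N, i < j → j < k → k < l →
    SameBlock P i k → SameBlock P j l → SameBlock P i j

section Aux

variable {N : ℕ} (P : Finpartition (Finset.univ : Finset (Fin N)))

lemma sameBlock_symm {i j : Fin N} (h : SameBlock P i j) : SameBlock P j i := by
  obtain ⟨b, hb, hi, hj⟩ := h; exact ⟨b, hb, hj, hi⟩

lemma sameBlock_trans {i j k : Fin N} (h₁ : SameBlock P i j) (h₂ : SameBlock P j k) :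
    SameBlock P i k := by
  obtain ⟨b, hb, hi, hj⟩ := h₁
  obtain ⟨c, hc, hj', hk⟩ := h₂
  exact ⟨b, hb, hi, (P.eq_of_mem_parts hc hb hj' hj) ▸ hk⟩

lemma mem_part_sameBlock {i j : Fin N} (h : j ∈ P.part i) : SameBlock P i j :=
  ⟨P.part i, P.part_mem.2 (Finset.mem_univ i), P.mem_part (Finset.mem_univ i), h⟩

end Aux

section Main

variable {n : ℕ} (P : Finpartition (Finset.univ : Finset (Fin (n+1))))

lemma lt_succ_of_ne_last' {k : Fin (n+1)} (hk : k ≠ Fin.last n) : k < k + 1 := by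
  rw [Fin.lt_def, Fin.val_add_one, if_neg hk]
  omega

lemma le_of_lt_succ' {k j : Fin (n+1)} (hk : k ≠ Fin.last n) (h : j < k + 1) : j ≤ k := by
  rw [Fin.lt_def, Fin.val_add_one, if_neg hk] at h
  rw [Fin.le_def]
  omega

lemma min_of_last {k : Fin (n+1)} (hk : k = Fin.last n) :
    ∀ j ∈ P.part (k + 1), k + 1 ≤ j := by
  subst hk
  simp [Fin.last_add_one, Fin.zero_le]

/-- Lemma A: if `k ≁ k+1` and `k+1` is not the minimum of its block,
then `k` is the maximum of its block. -/
lemma max_of_not_min (hP : IsNonCrossing P) {k : Fin (n+1)}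
    (hk : ¬ SameBlock P k (k + 1))
    (hmin : ¬ ∀ j ∈ P.part (k + 1), k + 1 ≤ j) :
    ∀ j ∈ P.part k, j ≤ k := by
  have hlast : k ≠ Fin.last n := fun h => hmin (min_of_last P h)
  have hlt : k < k + 1 := lt_succ_of_ne_last' hlast
  push_neg at hmin
  obtain ⟨j, hj, hjlt⟩ := hmin
  have hjsb : SameBlock P j (k + 1) := sameBlock_symm P (mem_part_sameBlock P hj)
  have hjk : j < k := by
    refine lt_of_le_of_ne (le_of_lt_succ' hlast hjlt) (fun h => ?_)
    exact hk (h ▸ hjsb)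
  intro j' hj'
  by_contra hj'k
  push_neg at hj'k
  have hksb : SameBlock P k j' := mem_part_sameBlock P hj'
  have hj'ne : k + 1 < j' := by
    refine lt_of_le_of_ne (Fin.add_one_le_of_lt hj'k) (fun h => ?_)
    exact hk (h ▸ hksb)
  have hjksb := hP j k (k+1) j' hjk hlt hj'ne hjsb hksb
  exact hk (sameBlock_trans P (sameBlock_symm P hjksb) hjsb)

/-- Lemma B: if `k ≁ k+1` and `k+1` is not the minimum of its block,
then the block of `k` is not the block of `0`. -/
lemma part_ne_part_zero (hP : IsNonCrossing P) {k : Fin (n+1)}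
    (hk : ¬ SameBlock P k (k + 1))
    (hmin : ¬ ∀ j ∈ P.part (k + 1), k + 1 ≤ j) :
    P.part k ≠ P.part 0 := by
  intro heq
  have h0k : SameBlock P k 0 :=
    mem_part_sameBlock P (heq ▸ P.mem_part (Finset.mem_univ (0 : Fin (n+1))))
  have hlast : k ≠ Fin.last n := fun h => hmin (min_of_last P h)
  have hlt : k < k + 1 := lt_succ_of_ne_last' hlast
  push_neg at hmin
  obtain ⟨j, hj, hjlt⟩ := hmin
  have hjsb : SameBlock P j (k + 1) := sameBlock_symm P (mem_part_sameBlock P hj)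
  have hjk : j < k := by
    refine lt_of_le_of_ne (le_of_lt_succ' hlast hjlt) (fun h => ?_)
    exact hk (h ▸ hjsb)
  have hj0 : j ≠ 0 := by
    rintro rfl
    exact hk (sameBlock_trans P h0k hjsb)
  have h0j : (0 : Fin (n+1)) < j := Fin.pos_iff_ne_zero.2 hj0
  have h0jsb := hP 0 j k (k+1) h0j hjk hlt (sameBlock_symm P h0k) hjsb
  exact hk (sameBlock_trans P h0k (sameBlock_trans P h0jsb hjsb))

end Main

/-- If `π` is a non-crossing partition of `[N]` with `α` blocks, then the number of
`k ∈ [N]` with `k ∼_π k+1` (cyclically) is at least `N − 2(α − 1)`. -/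
theorem card_cyclic_consecutive_ge (N : ℕ) [NeZero N]
    (P : Finpartition (Finset.univ : Finset (Fin N))) (hP : IsNonCrossing P) :
    N - 2 * (P.parts.card - 1) ≤
      (Finset.univ.filter (fun k : Fin N => SameBlock P k (k + 1))).card := by
  obtain ⟨n, rfl⟩ := Nat.exists_eq_succ_of_ne_zero (NeZero.ne N)
  classical
  set W : Finset (Fin (n+1)) :=
    Finset.univ.filter (fun k : Fin (n+1) => ¬ SameBlock P k (k + 1)) with hW
  set φ : Fin (n+1) → Finset (Fin (n+1)) × Bool := fun k =>
    if (∀ j ∈ P.part (k + 1), k + 1 ≤ j) then (P.part (k + 1), false) else (P.part k, true)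
    with hφ
  have hφpos : ∀ k : Fin (n+1), (∀ j ∈ P.part (k + 1), k + 1 ≤ j) →
      φ k = (P.part (k + 1), false) := fun k h => if_pos h
  have hφneg : ∀ k : Fin (n+1), ¬ (∀ j ∈ P.part (k + 1), k + 1 ≤ j) →
      φ k = (P.part k, true) := fun k h => if_neg h
  set e₁ : Finset (Fin (n+1)) × Bool := (P.part 0, true) with he₁
  set e₂ : Finset (Fin (n+1)) × Bool :=
    if SameBlock P (Fin.last n) 0 then (P.part 0, false) else (P.part (Fin.last n), true)
    with he₂
  set S : Finset (Finset (Fin (n+1)) × Bool) :=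
    (P.parts ×ˢ (Finset.univ : Finset Bool)) \ {e₁, e₂} with hS
  have hmapsto : ∀ k ∈ W, φ k ∈ S := by
    intro k hkW
    have hk : ¬ SameBlock P k (k + 1) := by
      simpa [hW] using hkW
    rw [hS, Finset.mem_sdiff]
    by_cases hmin : ∀ j ∈ P.part (k + 1), k + 1 ≤ j
    · rw [hφpos k hmin]
      refine ⟨Finset.mem_product.2 ⟨P.part_mem.2 (Finset.mem_univ _), Finset.mem_univ _⟩, ?_⟩
      simp only [Finset.mem_insert, Finset.mem_singleton]
      push_neg
      refine ⟨by simp [he₁], ?_⟩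
      rw [he₂]
      by_cases h0 : SameBlock P (Fin.last n) 0
      · rw [if_pos h0]
        intro hcon
        have hpeq : P.part (k+1) = P.part 0 := congrArg Prod.fst hcon
        have h0mem : (0 : Fin (n+1)) ∈ P.part (k+1) :=
          hpeq ▸ P.mem_part (Finset.mem_univ _)
        have hk10 : k + 1 = 0 := le_antisymm (hmin 0 h0mem) (Fin.zero_le _)
        have hkl : k = Fin.last n := by
          apply add_right_cancel (b := (1 : Fin (n+1)))
          rw [hk10, Fin.last_add_one]
        refine hk ?_
        rw [hkl, Fin.last_add_one]
        exact h0
      · rw [if_neg h0]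
        simp
    · rw [hφneg k hmin]
      refine ⟨Finset.mem_product.2 ⟨P.part_mem.2 (Finset.mem_univ _), Finset.mem_univ _⟩, ?_⟩
      simp only [Finset.mem_insert, Finset.mem_singleton]
      push_neg
      constructor
      · rw [he₁]
        intro hcon
        exact part_ne_part_zero P hP hk hmin (congrArg Prod.fst hcon)
      · rw [he₂]
        by_cases h0 : SameBlock P (Fin.last n) 0
        · rw [if_pos h0]; simp
        · rw [if_neg h0]
          intro hcon
          have hpeq : P.part k = P.part (Fin.last n) := congrArg Prod.fst hcon
          have hmax := max_of_not_min P hP hk hmin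
          have hlmem : Fin.last n ∈ P.part k := hpeq ▸ P.mem_part (Finset.mem_univ _)
          have hkl : k = Fin.last n := le_antisymm (Fin.le_last k) (hmax _ hlmem)
          exact hmin (min_of_last P hkl)
  have hinj : Set.InjOn φ W := by
    intro k₁ hk₁ k₂ hk₂ heq
    have hk1 : ¬ SameBlock P k₁ (k₁ + 1) := by simpa [hW] using hk₁
    have hk2 : ¬ SameBlock P k₂ (k₂ + 1) := by simpa [hW] using hk₂
    by_cases h1 : ∀ j ∈ P.part (k₁ + 1), k₁ + 1 ≤ j <;>
      by_cases h2 : ∀ j ∈ P.part (k₂ + 1), k₂ + 1 ≤ j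
    · rw [hφpos k₁ h1, hφpos k₂ h2] at heq
      have hbeq : P.part (k₁+1) = P.part (k₂+1) := congrArg Prod.fst heq
      have m1 : k₂ + 1 ∈ P.part (k₁+1) := hbeq ▸ P.mem_part (Finset.mem_univ _)
      have m2 : k₁ + 1 ∈ P.part (k₂+1) := hbeq ▸ P.mem_part (Finset.mem_univ _)
      have : k₁ + 1 = k₂ + 1 := le_antisymm (h1 _ m1) (h2 _ m2)
      exact add_right_cancel this
    · rw [hφpos k₁ h1, hφneg k₂ h2] at heq
      exact absurd (congrArg Prod.snd heq) (by simp)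
    · rw [hφneg k₁ h1, hφpos k₂ h2] at heq
      exact absurd (congrArg Prod.snd heq) (by simp)
    · rw [hφneg k₁ h1, hφneg k₂ h2] at heq
      have hbeq : P.part k₁ = P.part k₂ := congrArg Prod.fst heq
      have hm1 := max_of_not_min P hP hk1 h1
      have hm2 := max_of_not_min P hP hk2 h2
      have m1 : k₂ ∈ P.part k₁ := hbeq ▸ P.mem_part (Finset.mem_univ _)
      have m2 : k₁ ∈ P.part k₂ := hbeq ▸ P.mem_part (Finset.mem_univ _)
      exact le_antisymm (hm2 _ m2) (hm1 _ m1)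
  have hcardW : W.card ≤ S.card := Finset.card_le_card_of_injOn φ hmapsto hinj
  have he12 : e₁ ≠ e₂ := by
    rw [he₁, he₂]
    by_cases h0 : SameBlock P (Fin.last n) 0
    · rw [if_pos h0]; simp
    · rw [if_neg h0]
      intro hcon
      have hpp : P.part 0 = P.part (Fin.last n) := congrArg Prod.fst hcon
      have hl0 : Fin.last n ∈ P.part 0 := hpp ▸ P.mem_part (Finset.mem_univ _)
      exact h0 (sameBlock_symm P (mem_part_sameBlock P hl0))
  have heS : ({e₁, e₂} : Finset (Finset (Fin (n+1)) × Bool)) ⊆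
      P.parts ×ˢ (Finset.univ : Finset Bool) := by
    intro x hx
    simp only [Finset.mem_insert, Finset.mem_singleton] at hx
    rcases hx with rfl | rfl
    · exact Finset.mem_product.2 ⟨P.part_mem.2 (Finset.mem_univ _), Finset.mem_univ _⟩
    · rw [he₂]
      by_cases h0 : SameBlock P (Fin.last n) 0
      · rw [if_pos h0]
        exact Finset.mem_product.2 ⟨P.part_mem.2 (Finset.mem_univ _), Finset.mem_univ _⟩
      · rw [if_neg h0]
        exact Finset.mem_product.2 ⟨P.part_mem.2 (Finset.mem_univ _), Finset.mem_univ _⟩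
  have hScard : S.card = P.parts.card * 2 - 2 := by
    rw [hS, Finset.card_sdiff_of_subset heS, Finset.card_product, Finset.card_univ, Fintype.card_bool,
      Finset.card_insert_of_notMem (by simpa using he12), Finset.card_singleton]
  have hα : 1 ≤ P.parts.card :=
    Finset.card_pos.2 ⟨P.part 0, P.part_mem.2 (Finset.mem_univ _)⟩
  have hsplit := Finset.card_filter_add_card_filter_not
    (s := (Finset.univ : Finset (Fin (n+1))))
    (p := fun k : Fin (n+1) => SameBlock P k (k + 1))
  rw [Finset.card_univ, Fintype.card_fin] at hsplit
  have hWle : W.card ≤ 2 * (P.parts.card - 1) := by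
    rw [hScard] at hcardW; omega
  have hWsum : (Finset.univ.filter (fun k : Fin (n+1) => SameBlock P k (k + 1))).card
      + W.card = n + 1 := by
    rw [hW]; exact hsplit
  have hd : (Finset.univ.filter (fun k : Fin (n+1) => SameBlock P k (k + 1))).card
      = n + 1 - W.card := Nat.eq_sub_of_add_eq hWsum
  rw [hd]
  exact Nat.sub_le_sub_left hWle (n + 1)
end

section
/- Let X₁, ..., X_N be complex matrices of the same shape (say α × β) and let m ≥ 1 be an integer. Then ∑_{i=1}^N Tr((Xᵢ* Xᵢ)^m) ≤ Tr((∑_{i=1}^N Xᵢ* Xᵢ)^m). -/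
open Matrix
open scoped ComplexOrder

section Aux

variable {n : Type*} [Fintype n] [DecidableEq n]

-- conjugation power lemma
lemma my_conj_pow (V M : Matrix n n ℂ) (hV : V * star V = 1) (hV' : star V * V = 1) (k : ℕ) :
    (V * M * star V) ^ k = V * M ^ k * star V := by
  induction k with
  | zero => simpa using hV.symm
  | succ k ih =>
      rw [pow_succ, ih, pow_succ]
      simp only [mul_assoc]
      rw [← mul_assoc (star V) V, hV', one_mul]

-- entry formula
lemma entry_formula (W : Matrix n n ℂ) (d : n → ℂ) (i : n) :
    (star W * diagonal d * W) i i = ∑ j, d j * (Complex.normSq (W j i) : ℂ) := by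
  simp [Matrix.mul_apply, Matrix.diagonal_apply, Finset.sum_ite_eq, star_apply]
  congr 1; ext j
  rw [Complex.normSq_eq_conj_mul_self]
  ring

-- scalar Jensen for powers
lemma jensen_pow (k : ℕ) (p c : n → ℝ) (hp : ∀ j, 0 ≤ p j) (hp1 : ∑ j, p j = 1)
    (hc : ∀ j, 0 ≤ c j) : (∑ j, p j * c j) ^ k ≤ ∑ j, p j * c j ^ k := by
  have := (convexOn_pow (𝕜 := ℝ) k).map_sum_le (t := Finset.univ) (w := p) (p := c)
    (fun j _ => hp j) hp1 (fun j _ => hc j)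
  simpa [smul_eq_mul] using this

lemma jensen_entry (k : ℕ) (W : Matrix n n ℂ) (hW : star W * W = 1) (c : n → ℝ)
    (hc : ∀ j, 0 ≤ c j) (i : n) :
    ((star W * diagonal (fun j => (c j : ℂ)) * W) i i).re ^ k
      ≤ ((star W * diagonal (fun j => (c j : ℂ)) ^ k * W) i i).re := by
  set p : n → ℝ := fun j => Complex.normSq (W j i) with hp
  have hp0 : ∀ j, 0 ≤ p j := fun j => Complex.normSq_nonneg _
  have h1 : (star W * W) i i = 1 := by rw [hW, Matrix.one_apply_eq]
  have hp1 : ∑ j, p j = 1 := by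
    rw [Matrix.mul_apply] at h1
    have : ((∑ j, p j : ℝ) : ℂ) = 1 := by
      push_cast
      rw [← h1]
      congr 1; ext j
      rw [star_apply, hp]
      rw [Complex.normSq_eq_conj_mul_self]
      norm_num
    exact_mod_cast this
  have e1 : ((star W * diagonal (fun j => (c j : ℂ)) * W) i i).re = ∑ j, p j * c j := by
    rw [entry_formula]
    push_cast
    rw [Complex.re_sum]
    congr 1; ext j
    simp [mul_comm]
    exact Or.inl rfl
  have e2 : ((star W * diagonal (fun j => (c j : ℂ)) ^ k * W) i i).re = ∑ j, p j * c j ^ k := by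
    rw [Matrix.diagonal_pow, entry_formula]
    rw [Complex.re_sum]
    congr 1; ext j
    simp only [Pi.pow_apply]
    rw [← Complex.ofReal_pow, ← Complex.ofReal_mul, Complex.ofReal_re]
    exact mul_comm _ _
  rw [e1, e2]
  exact jensen_pow k p c hp0 hp1 hc

lemma L1 (C : Matrix n n ℂ) (hC : C.PosSemidef) (U : Matrix n n ℂ)
    (hU : star U * U = 1) (hU' : U * star U = 1) (k : ℕ) (i : n) :
    ((star U * C * U) i i).re ^ k ≤ ((star U * C ^ k * U) i i).re := by
  set c : n → ℝ := hC.1.eigenvalues with hc_def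
  have hc : ∀ j, 0 ≤ c j := hC.eigenvalues_nonneg
  set V : Matrix n n ℂ := (hC.1.eigenvectorUnitary : Matrix n n ℂ) with hV_def
  have hV : star V * V = 1 := mem_unitaryGroup_iff'.mp hC.1.eigenvectorUnitary.2
  have hV' : V * star V = 1 := mem_unitaryGroup_iff.mp hC.1.eigenvectorUnitary.2
  have hCV : C = V * diagonal (fun j => (c j : ℂ)) * star V := hC.1.spectral_theorem
  set W : Matrix n n ℂ := star V * U with hW_def
  have hW : star W * W = 1 := by
    rw [hW_def, StarMul.star_mul, star_star]
    calc star U * V * (star V * U) = star U * (V * star V) * U := by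
          simp only [mul_assoc]
      _ = 1 := by rw [hV']; rw [mul_one, hU]
  have hpow : C ^ k = V * (diagonal (fun j => (c j : ℂ))) ^ k * star V :=
    by rw [hCV, my_conj_pow _ _ hV' hV]
  have e1 : star U * C * U = star W * diagonal (fun j => (c j : ℂ)) * W := by
    rw [hCV, hW_def, StarMul.star_mul, star_star]
    simp only [mul_assoc]
  have e2 : star U * C ^ k * U = star W * (diagonal (fun j => (c j : ℂ))) ^ k * W := by
    rw [hpow, hW_def, StarMul.star_mul, star_star]
    simp only [mul_assoc]
  rw [e1, e2]
  exact jensen_entry k W hW c hc i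

lemma psd_diag_re_nonneg {M : Matrix n n ℂ} (hM : M.PosSemidef) (i : n) :
    0 ≤ (M i i).re := by
  have h := hM.re_dotProduct_nonneg (Pi.single i 1)
  simpa [dotProduct, mulVec, Pi.single_apply, Finset.sum_ite_eq] using h

lemma trace_pow_eq {A : Matrix n n ℂ} (hA : A.PosSemidef) (k : ℕ) :
    trace (A ^ k) = ((∑ i, hA.1.eigenvalues i ^ k : ℝ) : ℂ) := by
  set a : n → ℝ := hA.1.eigenvalues
  set U : Matrix n n ℂ := (hA.1.eigenvectorUnitary : Matrix n n ℂ)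
  have hU : star U * U = 1 := mem_unitaryGroup_iff'.mp hA.1.eigenvectorUnitary.2
  have hU' : U * star U = 1 := mem_unitaryGroup_iff.mp hA.1.eigenvectorUnitary.2
  have hAU : A = U * diagonal (fun j => (a j : ℂ)) * star U := hA.1.spectral_theorem
  rw [hAU, my_conj_pow _ _ hU' hU, trace_mul_cycle, hU, one_mul,
    Matrix.diagonal_pow, trace_diagonal]
  push_cast
  simp

lemma keyK {A B : Matrix n n ℂ} (hA : A.PosSemidef) (hB : B.PosSemidef) (k : ℕ) :
    (trace (A ^ (k + 1))).re ≤ (trace (A * (A + B) ^ k)).re := by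
  set C : Matrix n n ℂ := A + B with hC_def
  have hC : C.PosSemidef := hA.add hB
  set a : n → ℝ := hA.1.eigenvalues with ha_def
  have ha : ∀ j, 0 ≤ a j := hA.eigenvalues_nonneg
  set U : Matrix n n ℂ := (hA.1.eigenvectorUnitary : Matrix n n ℂ) with hU_def
  have hU : star U * U = 1 := mem_unitaryGroup_iff'.mp hA.1.eigenvectorUnitary.2
  have hU' : U * star U = 1 := mem_unitaryGroup_iff.mp hA.1.eigenvectorUnitary.2
  have hAU : A = U * diagonal (fun j => (a j : ℂ)) * star U := hA.1.spectral_theorem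
  -- trace (A ^ (k+1))
  have t1 : trace (A ^ (k + 1)) = ((∑ i, a i ^ (k + 1) : ℝ) : ℂ) := trace_pow_eq hA (k + 1)
  -- trace (A * C ^ k)
  have t2 : trace (A * C ^ k) = ∑ i, (a i : ℂ) * ((star U * C ^ k * U) i i) := by
    conv_lhs => rw [hAU]
    have h3 : U * diagonal (fun j => (a j : ℂ)) * star U * C ^ k
        = U * (diagonal (fun j => (a j : ℂ)) * (star U * C ^ k)) := by
      simp only [mul_assoc]
    rw [h3, trace_mul_comm]
    have h4 : diagonal (fun j => (a j : ℂ)) * (star U * C ^ k) * U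
        = diagonal (fun j => (a j : ℂ)) * (star U * C ^ k * U) := by
      simp only [mul_assoc]
    rw [h4, Matrix.trace]
    congr 1; ext i
    rw [Matrix.diag_apply, Matrix.diagonal_mul]
  rw [t1, t2, Complex.ofReal_re, Complex.re_sum]
  apply Finset.sum_le_sum
  intro i _
  have hMre : ((a i : ℂ) * ((star U * C ^ k * U) i i)).re
      = a i * ((star U * C ^ k * U) i i).re := by
    simp
  rw [hMre]
  have h6 : star U * A * U = diagonal (fun j => (a j : ℂ)) := by
    rw [hAU]; simp only [mul_assoc]; rw [hU, mul_one, ← mul_assoc, hU, one_mul]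
  have hBU : (star U * B * U).PosSemidef := by
    have h7 := hB.conjTranspose_mul_mul_same U
    rwa [← Matrix.star_eq_conjTranspose] at h7
  have h5 : a i ≤ ((star U * C * U) i i).re := by
    have hdecomp : star U * C * U = diagonal (fun j => (a j : ℂ)) + star U * B * U := by
      rw [hC_def, mul_add, add_mul, h6]
    rw [hdecomp, Matrix.add_apply, Complex.add_re, Matrix.diagonal_apply_eq,
      Complex.ofReal_re]
    exact le_add_of_nonneg_right (psd_diag_re_nonneg hBU i)
  have h8 : a i ^ k ≤ ((star U * C ^ k * U) i i).re :=
    le_trans (pow_le_pow_left₀ (ha i) h5 k) (L1 C hC U hU hU' k i)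
  calc a i ^ (k + 1) = a i * a i ^ k := by ring
    _ ≤ a i * ((star U * C ^ k * U) i i).re := mul_le_mul_of_nonneg_left h8 (ha i)

lemma twoM {A B : Matrix n n ℂ} (hA : A.PosSemidef) (hB : B.PosSemidef) (k : ℕ) :
    trace (A ^ (k + 1)) + trace (B ^ (k + 1)) ≤ trace ((A + B) ^ (k + 1)) := by
  have hsplit : trace ((A + B) ^ (k + 1))
      = trace (A * (A + B) ^ k) + trace (B * (A + B) ^ k) := by
    rw [pow_succ, mul_add, trace_add, trace_mul_comm ((A + B) ^ k) A,
      trace_mul_comm ((A + B) ^ k) B]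
  rw [Complex.le_def]
  constructor
  · rw [Complex.add_re, hsplit, Complex.add_re]
    refine add_le_add (keyK hA hB k) ?_
    have h := keyK hB hA k
    rwa [add_comm B A] at h
  · rw [Complex.add_im, trace_pow_eq hA, trace_pow_eq hB, trace_pow_eq (hA.add hB)]
    simp [← Complex.ofReal_pow]

lemma sumM {ι : Type*} (s : Finset ι) (f : ι → Matrix n n ℂ)
    (h : ∀ i, (f i).PosSemidef) (k : ℕ) :
    ∑ i ∈ s, trace (f i ^ (k + 1)) ≤ trace ((∑ i ∈ s, f i) ^ (k + 1)) := by
  induction s using Finset.cons_induction with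
  | empty => simp
  | cons a s ha ih =>
      rw [Finset.sum_cons, Finset.sum_cons]
      calc trace (f a ^ (k + 1)) + ∑ i ∈ s, trace (f i ^ (k + 1))
          ≤ trace (f a ^ (k + 1)) + trace ((∑ i ∈ s, f i) ^ (k + 1)) := by
            exact add_le_add le_rfl ih
        _ ≤ trace ((f a + ∑ i ∈ s, f i) ^ (k + 1)) := by
            refine twoM (h a) ?_ k
            exact Finset.sum_induction f _ (fun _ _ hx hy => hx.add hy)
              Matrix.PosSemidef.zero (fun i _ => h i)

end Aux

/-- For complex matrices `X₁,...,X_N` of the same shape and `m ≥ 1`,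
`∑ᵢ Tr((Xᵢ* Xᵢ)^m) ≤ Tr((∑ᵢ Xᵢ* Xᵢ)^m)` (inequality in `ℂ`, using the partial
order on `ℂ`; both sides are in fact nonnegative reals). -/
theorem sum_trace_pow_le (N α β m : ℕ) (hm : 1 ≤ m)
    (X : Fin N → Matrix (Fin α) (Fin β) ℂ) :
    ∑ i, Matrix.trace (((X i)ᴴ * X i) ^ m) ≤ Matrix.trace ((∑ i, (X i)ᴴ * X i) ^ m) := by
  obtain ⟨k, rfl⟩ : ∃ k, m = k + 1 := ⟨m - 1, (Nat.succ_pred_eq_of_pos hm).symm⟩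
  exact sumM Finset.univ (fun i => (X i)ᴴ * X i)
    (fun i => Matrix.posSemidef_conjTranspose_mul_self (X i)) k
end

section
/- Let p be a prime, d ≥ 2 an integer, and define a_{k₁,...,k_d} = exp(2πi k₁⋯k_d / p) for k₁,...,k_d ∈ {1,...,p}. For 1 ≤ l ≤ d−1 let M_l be the p^l × p^{d−l} matrix whose ((k₁,...,k_l),(k_{l+1},...,k_d)) entry is a_{k₁,...,k_d}. Then the operator norm of M_l satisfies ‖M_l‖² ≤ (d−1) · p^{d−1}. -/
open Matrix Complex

/-- The operator norm (largest singular value) of a rectangular complex matrix. -/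
noncomputable def opNorm {α β : Type*} [Fintype α] [Fintype β] [DecidableEq α] [DecidableEq β]
    (A : Matrix α β ℂ) : ℝ :=
  ‖(Matrix.toEuclideanLin A).toContinuousLinearMap‖

/-- The matrix `M_l` built from `a_{k₁,...,k_d} = exp(2πi k₁⋯k_d / p)`: rows indexed
by `{1,...,p}^l` (encoded as `Fin l → Fin p`, `s i` representing `(s i)+1`), columns by
`{1,...,p}^{d-l}`. -/
noncomputable def Mmat (p d l : ℕ) : Matrix (Fin l → Fin p) (Fin (d - l) → Fin p) ℂ :=
  Matrix.of fun s t =>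
    Complex.exp (2 * Real.pi * Complex.I *
      ((∏ i, ((s i : ℕ) + 1 : ℕ)) * (∏ j, ((t j : ℕ) + 1 : ℕ)) : ℕ) / p)

lemma schur_bound {m n : Type*} [Fintype m] [Fintype n] [DecidableEq m] [DecidableEq n]
    (A : Matrix m n ℂ) (K : ℝ) (hK : 0 ≤ K)
    (h : ∀ j, ∑ j', ‖(Aᴴ * A) j j'‖ ≤ K) :
    opNorm A ^ 2 ≤ K := by
  set G := Aᴴ * A with hGdef
  have hsymm : ∀ j j', ‖G j j'‖ = ‖G j' j‖ := by
    intro j j'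
    have hH : Gᴴ = G := Matrix.isHermitian_conjTranspose_mul_self A
    conv_rhs => rw [← hH]
    rw [Matrix.conjTranspose_apply, norm_star]
  have key : ∀ x : EuclideanSpace ℂ n,
      ‖(Matrix.toEuclideanLin A).toContinuousLinearMap x‖ ^ 2 ≤ K * ‖x‖ ^ 2 := by
    intro x
    have hTx : ‖(Matrix.toEuclideanLin A).toContinuousLinearMap x‖ ^ 2
        = ∑ i, ‖∑ j, A i j * x j‖ ^ 2 := by
      rw [LinearMap.coe_toContinuousLinearMap']
      rw [EuclideanSpace.norm_eq, Real.sq_sqrt (by positivity)]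
      rfl
    have expand : (∑ i, ∑ j, ∑ j', (starRingEnd ℂ (x j) * x j') * (starRingEnd ℂ (A i j) * A i j'))
        = ∑ j, ∑ j', (starRingEnd ℂ (x j) * x j') * G j j' := by
      rw [Finset.sum_comm]
      refine Finset.sum_congr rfl fun j _ => ?_
      rw [Finset.sum_comm]
      refine Finset.sum_congr rfl fun j' _ => ?_
      rw [hGdef, Matrix.mul_apply, Finset.mul_sum]
      exact Finset.sum_congr rfl fun i _ => by rw [Matrix.conjTranspose_apply]; rfl
    have step1 : ∑ i, ‖∑ j, A i j * x j‖ ^ 2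
        = (∑ j, ∑ j', (starRingEnd ℂ (x j) * x j') * G j j').re := by
      rw [← expand, Complex.re_sum]
      refine Finset.sum_congr rfl fun i _ => ?_
      have h0 : (‖∑ j, A i j * x j‖ : ℝ) ^ 2
          = (starRingEnd ℂ (∑ j, A i j * x j) * (∑ j, A i j * x j)).re := by
        rw [← Complex.normSq_eq_conj_mul_self, Complex.ofReal_re,
          Complex.sq_norm]
      rw [h0]
      congr 1
      rw [map_sum, Finset.sum_mul_sum]
      exact Finset.sum_congr rfl fun j _ => Finset.sum_congr rfl fun j' _ => by
        rw [_root_.map_mul]; ring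
    have step2 : (∑ j, ∑ j', (starRingEnd ℂ (x j) * x j') * G j j').re
        ≤ ∑ j, ∑ j', ‖x j‖ * ‖x j'‖ * ‖G j j'‖ := by
      rw [Complex.re_sum]
      refine Finset.sum_le_sum fun j _ => ?_
      rw [Complex.re_sum]
      refine Finset.sum_le_sum fun j' _ => ?_
      calc ((starRingEnd ℂ (x j) * x j') * G j j').re
          ≤ ‖(starRingEnd ℂ (x j) * x j') * G j j'‖ := Complex.re_le_norm _
        _ = ‖x j‖ * ‖x j'‖ * ‖G j j'‖ := by
            rw [norm_mul, norm_mul, RCLike.norm_conj]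
    have step3 : ∑ j, ∑ j', ‖x j‖ * ‖x j'‖ * ‖G j j'‖ ≤ K * ∑ j, ‖x j‖ ^ 2 := by
      have hhalf : ∑ j, ∑ j', ‖x j‖ * ‖x j'‖ * ‖G j j'‖
          ≤ ∑ j, ∑ j', (‖x j‖^2 / 2 + ‖x j'‖^2 / 2) * ‖G j j'‖ := by
        refine Finset.sum_le_sum fun j _ => Finset.sum_le_sum fun j' _ => ?_
        have h1 : ‖x j‖ * ‖x j'‖ ≤ ‖x j‖^2/2 + ‖x j'‖^2/2 := by
          nlinarith [sq_nonneg (‖x j‖ - ‖x j'‖)]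
        exact mul_le_mul_of_nonneg_right h1 (norm_nonneg _)
      have swapped : ∑ j, ∑ j', ‖x j'‖^2/2 * ‖G j j'‖ = ∑ j, ∑ j', ‖x j‖^2/2 * ‖G j j'‖ := by
        rw [Finset.sum_comm]
        exact Finset.sum_congr rfl fun j _ => Finset.sum_congr rfl fun j' _ => by rw [hsymm]
      have split : ∑ j, ∑ j', (‖x j‖^2 / 2 + ‖x j'‖^2 / 2) * ‖G j j'‖
          = ∑ j, ∑ j', ‖x j‖^2/2 * ‖G j j'‖ + ∑ j, ∑ j', ‖x j'‖^2/2 * ‖G j j'‖ := by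
        simp only [add_mul, Finset.sum_add_distrib]
      have bnd : ∑ j, ∑ j', ‖x j‖^2/2 * ‖G j j'‖ ≤ ∑ j, ‖x j‖^2/2 * K := by
        refine Finset.sum_le_sum fun j _ => ?_
        rw [← Finset.mul_sum]
        exact mul_le_mul_of_nonneg_left (h j) (by positivity)
      have final : ∑ j, ‖x j‖^2/2 * K + ∑ j, ‖x j‖^2/2 * K = K * ∑ j, ‖x j‖ ^ 2 := by
        rw [← Finset.sum_mul, ← Finset.sum_div]
        ring
      calc ∑ j, ∑ j', ‖x j‖ * ‖x j'‖ * ‖G j j'‖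
          ≤ ∑ j, ∑ j', (‖x j‖^2 / 2 + ‖x j'‖^2 / 2) * ‖G j j'‖ := hhalf
        _ = ∑ j, ∑ j', ‖x j‖^2/2 * ‖G j j'‖ + ∑ j, ∑ j', ‖x j'‖^2/2 * ‖G j j'‖ := split
        _ = ∑ j, ∑ j', ‖x j‖^2/2 * ‖G j j'‖ + ∑ j, ∑ j', ‖x j‖^2/2 * ‖G j j'‖ := by
            rw [swapped]
        _ ≤ ∑ j, ‖x j‖^2/2 * K + ∑ j, ‖x j‖^2/2 * K := add_le_add bnd bnd
        _ = K * ∑ j, ‖x j‖ ^ 2 := final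
    have hxnorm : ‖x‖ ^ 2 = ∑ j, ‖x j‖ ^ 2 := by
      rw [EuclideanSpace.norm_eq, Real.sq_sqrt (by positivity)]
    rw [hTx, hxnorm, step1]
    exact step2.trans step3
  have hop : opNorm A ≤ Real.sqrt K := by
    refine ContinuousLinearMap.opNorm_le_bound _ (Real.sqrt_nonneg K) fun x => ?_
    calc ‖(Matrix.toEuclideanLin A).toContinuousLinearMap x‖
        = Real.sqrt (‖(Matrix.toEuclideanLin A).toContinuousLinearMap x‖ ^ 2) :=
          (Real.sqrt_sq (norm_nonneg _)).symm
      _ ≤ Real.sqrt (K * ‖x‖ ^ 2) := Real.sqrt_le_sqrt (key x)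
      _ = Real.sqrt K * ‖x‖ := by
          rw [Real.sqrt_mul hK, Real.sqrt_sq (norm_nonneg _)]
  calc opNorm A ^ 2 ≤ Real.sqrt K ^ 2 := pow_le_pow_left₀ (norm_nonneg _) hop 2
    _ = K := Real.sq_sqrt hK

noncomputable def ee (p : ℕ) (c : ℤ) : ℂ := Complex.exp (2 * Real.pi * Complex.I * c / p)

def tup {p k : ℕ} (s : Fin k → Fin p) : ℕ := ∏ i, ((s i : ℕ) + 1)

lemma ee_add (p : ℕ) (a b : ℤ) : ee p (a + b) = ee p a * ee p b := by
  rw [ee, ee, ee, ← Complex.exp_add]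
  congr 1
  push_cast
  ring

lemma ee_conj (p : ℕ) (c : ℤ) : star (ee p c) = ee p (-c) := by
  rw [ee, ee]
  rw [show (star (Complex.exp (2 * Real.pi * Complex.I * c / p)) : ℂ)
      = (starRingEnd ℂ) (Complex.exp (2 * Real.pi * Complex.I * c / p)) from rfl]
  rw [← Complex.exp_conj]
  congr 1
  simp only [map_div₀, _root_.map_mul, Complex.conj_I, Complex.conj_ofReal, map_intCast,
    map_natCast, map_ofNat, Int.cast_neg]
  ring

lemma ee_pow (p : ℕ) (c : ℤ) (n : ℕ) : ee p c ^ n = ee p (n * c) := by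
  induction n with
  | zero => simp [ee]
  | succ n ih =>
    rw [pow_succ, ih, ← ee_add]
    congr 1
    push_cast
    ring

lemma ee_eq_one (p : ℕ) (hp : p ≠ 0) {c : ℤ} (h : (p : ℤ) ∣ c) : ee p c = 1 := by
  obtain ⟨m, rfl⟩ := h
  rw [ee, show 2 * (Real.pi:ℂ) * Complex.I * ((p:ℤ) * m : ℤ) / p = m * (2 * Real.pi * Complex.I) by
    have hp' : (p : ℂ) ≠ 0 := Nat.cast_ne_zero.mpr hp
    push_cast
    field_simp]
  exact Complex.exp_int_mul_two_pi_mul_I m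

lemma ee_ne_one (p : ℕ) (hp : p.Prime) {c : ℤ} (h : ¬ (p : ℤ) ∣ c) : ee p c ≠ 1 := by
  intro h1
  rw [ee, Complex.exp_eq_one_iff] at h1
  obtain ⟨n, hn⟩ := h1
  apply h
  refine ⟨n, ?_⟩
  have hp' : (p : ℂ) ≠ 0 := Nat.cast_ne_zero.mpr hp.pos.ne'
  have hpi : (Real.pi : ℂ) ≠ 0 := Complex.ofReal_ne_zero.mpr Real.pi_ne_zero
  have h2 : (c : ℂ) = (p : ℂ) * n := by
    field_simp at hn
    have h3 : (2 * (Real.pi:ℂ) * Complex.I) * (c:ℂ)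
        = (2 * (Real.pi:ℂ) * Complex.I) * ((p:ℂ) * n) := by linear_combination (2 * (Real.pi:ℂ) * Complex.I) * hn
    exact mul_left_cancel₀ (by simp [hpi, Complex.I_ne_zero]) h3
  exact_mod_cast h2

lemma sum_ee (p : ℕ) (hp : p.Prime) (c : ℤ) :
    ∑ t : Fin p, ee p (c * ((t : ℕ) + 1)) = if (p : ℤ) ∣ c then (p : ℂ) else 0 := by
  have h1 : ∀ t : Fin p, ee p (c * ((t : ℕ) + 1)) = ee p c ^ ((t : ℕ) + 1) := by
    intro t
    rw [ee_pow]
    congr 1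
    push_cast
    ring
  split_ifs with h
  · have : ∀ t : Fin p, ee p (c * ((t : ℕ) + 1)) = 1 := fun t =>
      ee_eq_one p hp.pos.ne' (h.mul_right _)
    simp [this]
  · set ζ := ee p c with hζ
    have hζ1 : ζ ≠ 1 := ee_ne_one p hp h
    have hζp : ζ ^ p = 1 := by
      rw [ee_pow]
      exact ee_eq_one p hp.pos.ne' ⟨c, rfl⟩
    calc ∑ t : Fin p, ee p (c * ((t : ℕ) + 1)) = ∑ t : Fin p, ζ ^ ((t : ℕ) + 1) := by
          exact Finset.sum_congr rfl fun t _ => h1 t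
      _ = ∑ i ∈ Finset.range p, ζ ^ (i + 1) := Fin.sum_univ_eq_sum_range (fun i => ζ ^ (i + 1)) p
      _ = ζ * ∑ i ∈ Finset.range p, ζ ^ i := by
          rw [Finset.mul_sum]
          exact Finset.sum_congr rfl fun i _ => by rw [pow_succ]; ring
      _ = ζ * ((ζ ^ p - 1) / (ζ - 1)) := by rw [geom_sum_eq hζ1]
      _ = 0 := by rw [hζp]; simp

lemma nat_pow_ineq (a : ℕ) (ha : 1 ≤ a) : ∀ k : ℕ, a ^ (k + 1) ≤ (a - 1) ^ (k + 1) + (k + 1) * a ^ k := by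
  intro k
  induction k with
  | zero => simpa using by omega
  | succ k ih =>
    have h1 : (a - 1) ^ (k + 1) ≤ a ^ (k + 1) := Nat.pow_le_pow_left (by omega) _
    calc a ^ (k + 2) = a * a ^ (k + 1) := by ring
      _ ≤ a * ((a - 1) ^ (k + 1) + (k + 1) * a ^ k) := Nat.mul_le_mul_left a ih
      _ = (a - 1 + 1) * (a - 1) ^ (k + 1) + (k + 1) * (a * a ^ k) := by
          rw [Nat.sub_add_cancel ha]; ring
      _ = (a - 1) ^ (k + 2) + ((a - 1) ^ (k + 1) + (k + 1) * a ^ (k + 1)) := by ring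
      _ ≤ (a - 1) ^ (k + 2) + (a ^ (k + 1) + (k + 1) * a ^ (k + 1)) := by
          exact Nat.add_le_add_left (Nat.add_le_add_right h1 _) _
      _ = (a - 1) ^ (k + 2) + (k + 2) * a ^ (k + 1) := by ring

lemma count_dvd (p k : ℕ) (hp : p.Prime) :
    (Finset.univ.filter fun u : Fin k → Fin p => p ∣ tup u).card + (p - 1) ^ k ≤ p ^ k := by
  classical
  have htotal : (Finset.univ.filter fun u : Fin k → Fin p => p ∣ tup u).card
      + (Finset.univ.filter fun u : Fin k → Fin p => ¬ p ∣ tup u).card = p ^ k := by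
    rw [Finset.card_filter_add_card_filter_not]
    simp [Fintype.card_fun]
  have hinj : (p - 1) ^ k ≤ (Finset.univ.filter fun u : Fin k → Fin p => ¬ p ∣ tup u).card := by
    rw [show (p - 1) ^ k = (Finset.univ : Finset (Fin k → Fin (p - 1))).card by
      simp [Fintype.card_fun]]
    apply Finset.card_le_card_of_injOn
      (f := fun (u : Fin k → Fin (p - 1)) => (fun i => Fin.castLE (Nat.sub_le p 1) (u i)))
    · intro u _
      rw [Finset.mem_coe, Finset.mem_filter]
      refine ⟨Finset.mem_univ _, ?_⟩
      intro hdvd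
      have hdvd' : p ∣ ∏ i, (((Fin.castLE (Nat.sub_le p 1) (u i) : Fin p) : ℕ) + 1) := hdvd
      obtain ⟨i, _, hi⟩ := (hp.prime.dvd_finset_prod_iff
        (fun i => (((Fin.castLE (Nat.sub_le p 1) (u i) : Fin p) : ℕ) + 1))).mp hdvd'
      have h1 : ((u i : ℕ) + 1) < p := by
        have := (u i).2
        omega
      have h2 : 0 < ((u i : ℕ) + 1) := Nat.succ_pos _
      have hi' : p ∣ ((u i : ℕ) + 1) := by simpa using hi
      have := Nat.le_of_dvd h2 hi'
      omega
    · intro u _ v _ huv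
      funext i
      have h3 := congrArg Fin.val (congrFun huv i)
      simp at h3
      exact Fin.ext h3
  omega

lemma count_congr_ne (p : ℕ) [Fact p.Prime] (k : ℕ) (a : ZMod p) (ha : a ≠ 0) :
    (Finset.univ.filter fun u : Fin (k+1) → Fin p => ((tup u : ℕ) : ZMod p) = a).card ≤ p ^ k := by
  classical
  rw [show p ^ k = (Finset.univ : Finset (Fin k → Fin p)).card by simp [Fintype.card_fun]]
  apply Finset.card_le_card_of_injOn (f := fun u (i : Fin k) => u i.succ)
  · intro u _
    exact Finset.mem_univ _
  · intro u hu v hv huv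
    rw [Finset.mem_coe, Finset.mem_filter] at hu hv
    have huv' : ∀ j : Fin k, u j.succ = v j.succ := fun j => congrFun huv j
    have hsplit : ∀ w : Fin (k+1) → Fin p, ((tup w : ℕ) : ZMod p)
        = (((w 0 : ℕ) : ZMod p) + 1) * ∏ i : Fin k, (((w i.succ : ℕ) : ZMod p) + 1) := by
      intro w
      rw [tup]
      push_cast
      rw [Fin.prod_univ_succ]
    have hQ : (∏ i : Fin k, (((u i.succ : ℕ) : ZMod p) + 1))
        = ∏ i : Fin k, (((v i.succ : ℕ) : ZMod p) + 1) :=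
      Finset.prod_congr rfl fun i _ => by rw [huv' i]
    have hQne : (∏ i : Fin k, (((v i.succ : ℕ) : ZMod p) + 1)) ≠ 0 := by
      intro h0
      apply ha
      rw [← hv.2, hsplit v, h0, mul_zero]
    have hkey : (((u 0 : ℕ) : ZMod p) + 1) = (((v 0 : ℕ) : ZMod p) + 1) := by
      have h4 := hu.2.trans hv.2.symm
      rw [hsplit u, hsplit v, hQ] at h4
      exact mul_right_cancel₀ hQne h4
    have h0 : u 0 = v 0 := by
      have h1 : ((u 0 : ℕ) : ZMod p) = ((v 0 : ℕ) : ZMod p) := add_right_cancel hkey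
      have h2 := congrArg ZMod.val h1
      rw [ZMod.val_cast_of_lt (u 0).2, ZMod.val_cast_of_lt (v 0).2] at h2
      exact Fin.ext h2
    funext i
    exact Fin.cases h0 huv' i

lemma count_class (p : ℕ) (hp : p.Prime) (k : ℕ) (a : ZMod p) :
    (Finset.univ.filter fun u : Fin (k+1) → Fin p => ((tup u : ℕ) : ZMod p) = a).card
      ≤ (k + 1) * p ^ k := by
  classical
  haveI : Fact p.Prime := ⟨hp⟩
  by_cases ha : a = 0
  · subst ha
    have hsub : (Finset.univ.filter fun u : Fin (k+1) → Fin p => ((tup u : ℕ) : ZMod p) = 0)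
        ⊆ Finset.univ.filter fun u : Fin (k+1) → Fin p => p ∣ tup u := by
      intro u hu
      rw [Finset.mem_filter] at hu ⊢
      exact ⟨hu.1, (ZMod.natCast_eq_zero_iff _ _).mp hu.2⟩
    have h1 := Finset.card_le_card hsub
    have h2 := count_dvd p (k+1) hp
    have h3 := nat_pow_ineq p hp.one_lt.le k
    omega
  · exact le_trans (count_congr_ne p k a ha) (Nat.le_mul_of_pos_left _ (Nat.succ_pos k))

lemma count_mul (p k : ℕ) (hp : p.Prime) :
    (Finset.univ.filter fun u : Fin k → Fin p => p ∣ tup u).card * p ≤ k * p ^ k := by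
  classical
  cases k with
  | zero =>
    have h0 : (Finset.univ.filter fun u : Fin 0 → Fin p => p ∣ tup u) = ∅ := by
      refine Finset.filter_eq_empty_iff.mpr fun u _ => ?_
      have : tup u = 1 := by simp [tup]
      rw [this]
      intro hdvd
      exact hp.one_lt.ne' (Nat.dvd_one.mp hdvd)
    rw [h0]
    simp
  | succ k =>
    have h1 := count_dvd p (k+1) hp
    have h2 := nat_pow_ineq p hp.one_lt.le k
    have h3 : (Finset.univ.filter fun u : Fin (k+1) → Fin p => p ∣ tup u).card
        ≤ (k+1) * p ^ k := by omega
    calc (Finset.univ.filter fun u : Fin (k+1) → Fin p => p ∣ tup u).card * p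
        ≤ ((k+1) * p ^ k) * p := Nat.mul_le_mul_right p h3
      _ = (k+1) * p ^ (k+1) := by ring

lemma Ssum_bound (p k : ℕ) (hp : p.Prime) (c : ℤ) (hc : ¬ (p : ℤ) ∣ c) :
    ‖∑ s : Fin (k+1) → Fin p, ee p (c * tup s)‖ ≤ (k : ℝ) * (p : ℝ) ^ k := by
  classical
  have hsum : ∑ s : Fin (k+1) → Fin p, ee p (c * tup s)
      = ∑ u : Fin k → Fin p, (if (p : ℤ) ∣ (tup u : ℤ) then (p : ℂ) else 0) := by
    rw [← Equiv.sum_comp (Fin.consEquiv (fun _ => Fin p)) (fun s => ee p (c * tup s)),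
      Fintype.sum_prod_type, Finset.sum_comm]
    refine Finset.sum_congr rfl fun u _ => ?_
    have htup : ∀ a : Fin p, tup ((Fin.consEquiv (fun _ => Fin p)) (a, u))
        = ((a : ℕ) + 1) * tup u := by
      intro a
      have hc0 : (Fin.consEquiv (fun _ => Fin p)) (a, u) = Fin.cons a u := rfl
      rw [hc0, tup, Fin.prod_univ_succ]
      simp [tup]
    calc ∑ a : Fin p, ee p (c * tup ((Fin.consEquiv (fun _ => Fin p)) (a, u)))
        = ∑ a : Fin p, ee p ((c * tup u) * ((a : ℕ) + 1)) := by
          refine Finset.sum_congr rfl fun a _ => ?_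
          rw [htup a]
          congr 1
          push_cast
          ring
      _ = if (p : ℤ) ∣ c * tup u then (p : ℂ) else 0 := sum_ee p hp _
      _ = if (p : ℤ) ∣ (tup u : ℤ) then (p : ℂ) else 0 := by
          have hpi : Prime (p : ℤ) := Nat.prime_iff_prime_int.mp hp
          simp only [hpi.dvd_mul, hc, false_or]
  rw [hsum]
  calc ‖∑ u : Fin k → Fin p, (if (p : ℤ) ∣ (tup u : ℤ) then (p : ℂ) else 0)‖
      ≤ ∑ u : Fin k → Fin p, ‖(if (p : ℤ) ∣ (tup u : ℤ) then (p : ℂ) else 0)‖ :=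
        norm_sum_le _ _
    _ = ∑ u : Fin k → Fin p, (if p ∣ tup u then (p : ℝ) else 0) := by
        refine Finset.sum_congr rfl fun u _ => ?_
        by_cases hdv : p ∣ tup u
        · rw [if_pos (Int.natCast_dvd_natCast.mpr hdv), if_pos hdv]
          simp
        · rw [if_neg (fun h => hdv (Int.natCast_dvd_natCast.mp h)), if_neg hdv]
          simp
    _ = (Finset.univ.filter fun u : Fin k → Fin p => p ∣ tup u).card * (p : ℝ) := by
        rw [Finset.sum_ite, Finset.sum_const, Finset.sum_const_zero, add_zero, nsmul_eq_mul]
    _ ≤ (k : ℝ) * (p : ℝ) ^ k := by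
        have h1 := count_mul p k hp
        have h2 : ((Finset.univ.filter fun u : Fin k → Fin p => p ∣ tup u).card * p : ℝ)
            ≤ ((k * p ^ k : ℕ) : ℝ) := by exact_mod_cast h1
        push_cast at h2
        linarith

theorem aux_bound (p l r : ℕ) (hp : p.Prime) (hl : 1 ≤ l) (hr : 1 ≤ r)
    (M : Matrix (Fin l → Fin p) (Fin r → Fin p) ℂ)
    (hM : ∀ s t, M s t = ee p ((tup s : ℤ) * (tup t : ℤ))) :
    opNorm M ^ 2 ≤ ((l + r - 1 : ℕ) : ℝ) * (p : ℝ) ^ (l + r - 1) := by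
  classical
  obtain ⟨k, rfl⟩ : ∃ k, l = k + 1 := ⟨l - 1, by omega⟩
  obtain ⟨k', rfl⟩ : ∃ k', r = k' + 1 := ⟨r - 1, by omega⟩
  haveI : Fact p.Prime := ⟨hp⟩
  have hexp : (k + 1) + (k' + 1) - 1 = k + k' + 1 := by omega
  rw [hexp]
  apply schur_bound _ _ (by positivity)
  intro t
  have hG : ∀ t t' : Fin (k'+1) → Fin p, (Mᴴ * M) t t'
      = ∑ s : Fin (k+1) → Fin p, ee p (((tup t' : ℤ) - (tup t : ℤ)) * (tup s : ℤ)) := by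
    intro t t'
    rw [Matrix.mul_apply]
    refine Finset.sum_congr rfl fun s _ => ?_
    rw [Matrix.conjTranspose_apply, hM, hM, ee_conj, ← ee_add]
    congr 1
    ring
  have hbound : ∀ t' : Fin (k'+1) → Fin p, ‖(Mᴴ * M) t t'‖
      ≤ if ((tup t' : ℕ) : ZMod p) = ((tup t : ℕ) : ZMod p)
        then (p : ℝ) ^ (k+1) else (k : ℝ) * (p : ℝ) ^ k := by
    intro t'
    rw [hG t t']
    by_cases hcase : ((tup t' : ℕ) : ZMod p) = ((tup t : ℕ) : ZMod p)
    · rw [if_pos hcase]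
      have hdvd : (p : ℤ) ∣ ((tup t' : ℤ) - (tup t : ℤ)) := by
        rw [← ZMod.intCast_zmod_eq_zero_iff_dvd]
        push_cast
        rw [sub_eq_zero]
        exact hcase
      have hone : ∀ s : Fin (k+1) → Fin p,
          ee p (((tup t' : ℤ) - (tup t : ℤ)) * (tup s : ℤ)) = 1 :=
        fun s => ee_eq_one p hp.pos.ne' (hdvd.mul_right _)
      rw [Finset.sum_congr rfl (fun s _ => hone s), Finset.sum_const]
      simp [Fintype.card_fun]
    · rw [if_neg hcase]
      have hndvd : ¬ (p : ℤ) ∣ ((tup t' : ℤ) - (tup t : ℤ)) := by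
        intro hdvd
        apply hcase
        have h1 := (ZMod.intCast_zmod_eq_zero_iff_dvd _ p).mpr hdvd
        push_cast at h1
        rw [sub_eq_zero] at h1
        exact h1
      exact Ssum_bound p k hp _ hndvd
  have h1 : ∑ t' : Fin (k'+1) → Fin p, ‖(Mᴴ * M) t t'‖
      ≤ ∑ t' : Fin (k'+1) → Fin p,
        (if ((tup t' : ℕ) : ZMod p) = ((tup t : ℕ) : ZMod p)
          then (p : ℝ) ^ (k+1) else (k : ℝ) * (p : ℝ) ^ k) :=
    Finset.sum_le_sum fun t' _ => hbound t'
  have hcntA : ((Finset.univ.filter fun t' : Fin (k'+1) → Fin p =>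
      ((tup t' : ℕ) : ZMod p) = ((tup t : ℕ) : ZMod p)).card : ℝ)
      ≤ ((k' + 1) : ℝ) * (p : ℝ) ^ k' := by
    have := count_class p hp k' ((tup t : ℕ) : ZMod p)
    have h2 : (((Finset.univ.filter fun t' : Fin (k'+1) → Fin p =>
        ((tup t' : ℕ) : ZMod p) = ((tup t : ℕ) : ZMod p)).card : ℕ) : ℝ)
        ≤ (((k' + 1) * p ^ k' : ℕ) : ℝ) := Nat.cast_le.mpr this
    push_cast at h2
    exact h2
  have hcntB : ((Finset.univ.filter fun t' : Fin (k'+1) → Fin p =>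
      ¬ ((tup t' : ℕ) : ZMod p) = ((tup t : ℕ) : ZMod p)).card : ℝ)
      ≤ (p : ℝ) ^ (k' + 1) := by
    have h2 : (Finset.univ.filter fun t' : Fin (k'+1) → Fin p =>
        ¬ ((tup t' : ℕ) : ZMod p) = ((tup t : ℕ) : ZMod p)).card ≤ p ^ (k' + 1) :=
      le_trans (Finset.card_filter_le _ _) (by simp [Fintype.card_fun])
    exact_mod_cast h2
  refine h1.trans ?_
  rw [Finset.sum_ite, Finset.sum_const, Finset.sum_const, nsmul_eq_mul, nsmul_eq_mul]
  calc ((Finset.univ.filter fun t' : Fin (k'+1) → Fin p =>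
        ((tup t' : ℕ) : ZMod p) = ((tup t : ℕ) : ZMod p)).card : ℝ) * (p : ℝ) ^ (k+1)
      + ((Finset.univ.filter fun t' : Fin (k'+1) → Fin p =>
        ¬ ((tup t' : ℕ) : ZMod p) = ((tup t : ℕ) : ZMod p)).card : ℝ) * ((k : ℝ) * (p : ℝ) ^ k)
      ≤ (((k' + 1) : ℝ) * (p : ℝ) ^ k') * (p : ℝ) ^ (k+1)
        + (p : ℝ) ^ (k' + 1) * ((k : ℝ) * (p : ℝ) ^ k) := by
        refine add_le_add (mul_le_mul_of_nonneg_right hcntA (by positivity))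
          (mul_le_mul_of_nonneg_right hcntB (by positivity))
    _ = ((k + k' + 1 : ℕ) : ℝ) * (p : ℝ) ^ (k + k' + 1) := by
        push_cast
        ring

/-- For `p` prime, `d ≥ 2` and `1 ≤ l ≤ d−1`, the operator norm of `M_l` satisfies
`‖M_l‖² ≤ (d−1) p^{d−1}`. -/
theorem opNorm_Mmat_sq_le (p d l : ℕ) (hp : p.Prime) (hd : 2 ≤ d)
    (hl : 1 ≤ l) (hl' : l ≤ d - 1) :
    opNorm (Mmat p d l) ^ 2 ≤ ((d : ℝ) - 1) * (p : ℝ) ^ (d - 1) := by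
  have hr : 1 ≤ d - l := by omega
  have hM : ∀ (s : Fin l → Fin p) (t : Fin (d - l) → Fin p),
      Mmat p d l s t = ee p ((tup s : ℤ) * (tup t : ℤ)) := by
    intro s t
    show Complex.exp _ = _
    rw [ee]
    congr 1
  have haux := aux_bound p l (d - l) hp hl hr (Mmat p d l) hM
  have hd2 : l + (d - l) = d := by omega
  rw [hd2] at haux
  have hcast : ((d - 1 : ℕ) : ℝ) = (d : ℝ) - 1 := by
    rw [Nat.cast_sub (by omega)]
    norm_num
  rw [hcast] at haux
  exact haux
end

section
/- Let m ≥ 1 and let π be a non-crossing partition of [2m] all of whose blocks have even cardinality. Define Φ(π) to be the partition of [m] obtained by identifying 2k−1 and 2k with k for each k ∈ [m] (i.e. the transitive closure of the relation relating k and l whenever some element of {2k−1,2k} is π-equivalent to some element of {2l−1,2l}). If {k₁ < k₂ < ... < k_p} is a block of Φ(π) (ordered cyclically), then for every i, the elements 2k_i and 2k_{i+1} − 1 lie in the same block of π (with the convention k_{p+1} = k₁). -/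
open Classical

/-- The element of `[2m]` (0-indexed) corresponding to the 1-based element `2k−1`,
where `k ∈ [m]` is represented 0-indexed. -/
def dbl {m : ℕ} (k : Fin m) : Fin (2 * m) := ⟨2 * k.val, by have := k.isLt; omega⟩

/-- The element of `[2m]` (0-indexed) corresponding to the 1-based element `2k`. -/
def dbl' {m : ℕ} (k : Fin m) : Fin (2 * m) := ⟨2 * k.val + 1, by have := k.isLt; omega⟩

/-- The relation on `[m]` defining `Φ(π)`: the transitive (and reflexive-symmetric)
closure of the relation relating `k` and `l` whenever some element of `{2k−1, 2k}` is
`π`-equivalent to some element of `{2l−1, 2l}`. -/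
def PhiRel {m : ℕ} (π : Finpartition (Finset.univ : Finset (Fin (2 * m)))) :
    Fin m → Fin m → Prop :=
  Relation.EqvGen (fun k l =>
    SameBlock π (dbl k) (dbl l) ∨ SameBlock π (dbl k) (dbl' l) ∨
    SameBlock π (dbl' k) (dbl l) ∨ SameBlock π (dbl' k) (dbl' l))

/-- `l` is the cyclic successor of `k` inside the finite set `B ⊆ ℤ/mℤ`:
either `B = {k}` and `l = k` (convention `k_{p+1} = k₁` for a singleton block), or
`l ∈ B \ {k}` minimizes the cyclic distance `(x − k) mod m` over `x ∈ B \ {k}`. -/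
def IsCyclicSuccIn {m : ℕ} (B : Finset (Fin m)) (k l : Fin m) : Prop :=
  k ∈ B ∧ l ∈ B ∧
    ((B = {k} ∧ l = k) ∨
      (l ≠ k ∧ ∀ x ∈ B, x ≠ k → (l - k).val ≤ (x - k).val))

lemma sub_val_eq {N : ℕ} (a b : Fin N) :
    (a - b).val = if b.val ≤ a.val then a.val - b.val else a.val + N - b.val := by
  have ha := a.isLt; have hb := b.isLt
  rw [Fin.sub_def]
  split
  · next h =>
    show (N - b.val + a.val) % N = _
    have e : N - b.val + a.val = (a.val - b.val) + N := by omega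
    rw [e, Nat.add_mod_right, Nat.mod_eq_of_lt (by omega)]
  · next h =>
    show (N - b.val + a.val) % N = _
    rw [Nat.mod_eq_of_lt (by omega)]; omega

lemma sub_val_inj {N : ℕ} {a b c : Fin N} (h : (a - c).val = (b - c).val) : a = b := by
  have ha := a.isLt; have hb := b.isLt; have hc := c.isLt
  rw [sub_val_eq, sub_val_eq] at h
  split at h <;> split at h <;> exact Fin.ext (by omega)

lemma sub_val_zero_iff {N : ℕ} {a b : Fin N} : (a - b).val = 0 ↔ a = b := by
  rw [sub_val_eq]
  have ha := a.isLt; have hb := b.isLt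
  constructor
  · intro h; split at h <;> [skip; omega]
    exact Fin.ext (by omega)
  · rintro rfl; simp

lemma add_sub_cancel_fin {N : ℕ} (a b : Fin N) : a + b - b = a := by
  have ha := a.isLt; have hb := b.isLt
  apply Fin.ext
  rw [sub_val_eq, Fin.add_def]
  show (if b.val ≤ (a.val + b.val) % N then (a.val + b.val) % N - b.val
      else (a.val + b.val) % N + N - b.val) = a.val
  have hc : (a.val + b.val) % N = if a.val + b.val < N then a.val + b.val
      else a.val + b.val - N := by
    split
    · exact Nat.mod_eq_of_lt ‹_›
    · rw [Nat.mod_eq_sub_mod (by omega), Nat.mod_eq_of_lt (by omega)]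
  rw [hc]; split_ifs <;> omega

lemma sb_symm {N : ℕ} {P : Finpartition (Finset.univ : Finset (Fin N))} {i j : Fin N}
    (h : SameBlock P i j) : SameBlock P j i := by
  obtain ⟨b, hb, hi, hj⟩ := h; exact ⟨b, hb, hj, hi⟩

lemma sb_block {N : ℕ} {P : Finpartition (Finset.univ : Finset (Fin N))} {i j : Fin N}
    {b : Finset (Fin N)} (hb : b ∈ P.parts) (hi : i ∈ b) (h : SameBlock P i j) : j ∈ b := by
  obtain ⟨c, hc, hic, hjc⟩ := h
  have := P.eq_of_mem_parts hc hb hic hi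
  exact this ▸ hjc

lemma cross_all {N : ℕ} {P : Finpartition (Finset.univ : Finset (Fin N))}
    (hnc : IsNonCrossing P) {i j k l : Fin N}
    (hij : i < j) (hjk : j < k) (hkl : k < l)
    (hik : SameBlock P i k) (hjl : SameBlock P j l) :
    ∃ b ∈ P.parts, i ∈ b ∧ j ∈ b ∧ k ∈ b ∧ l ∈ b := by
  obtain ⟨b, hb, hi, hj⟩ := hnc i j k l hij hjk hkl hik hjl
  exact ⟨b, hb, hi, hj, sb_block hb hi hik, sb_block hb hj hjl⟩

lemma cross_cyc {N : ℕ} {P : Finpartition (Finset.univ : Finset (Fin N))}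
    (hnc : IsNonCrossing P) (o : Fin N) {w x y z : Fin N}
    (h1 : (w - o).val < (x - o).val) (h2 : (x - o).val < (y - o).val)
    (h3 : (y - o).val < (z - o).val)
    (hwy : SameBlock P w y) (hxz : SameBlock P x z) :
    ∃ b ∈ P.parts, w ∈ b ∧ x ∈ b ∧ y ∈ b ∧ z ∈ b := by
  rw [sub_val_eq] at h1 h2 h3
  rw [sub_val_eq (b := o)] at h1 h2 h3
  have hw := w.isLt; have hx := x.isLt; have hy := y.isLt; have hz := z.isLt
  have ho := o.isLt
  by_cases cw : o.val ≤ w.val <;> by_cases cx : o.val ≤ x.val <;>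
    by_cases cy : o.val ≤ y.val <;> by_cases cz : o.val ≤ z.val <;>
    simp only [cw, cx, cy, cz, if_pos, if_neg, if_true, if_false] at h1 h2 h3 <;>
    [skip; skip; omega; skip; omega; omega; omega; skip; omega; omega; omega; omega; omega; omega; omega; skip]
  · exact cross_all hnc (Fin.lt_def.mpr (by omega)) (Fin.lt_def.mpr (by omega))
      (Fin.lt_def.mpr (by omega)) hwy hxz
  · obtain ⟨b, hb, h₁, h₂, h₃, h₄⟩ := cross_all hnc (i := z) (j := w) (k := x) (l := y)
      (Fin.lt_def.mpr (by omega)) (Fin.lt_def.mpr (by omega)) (Fin.lt_def.mpr (by omega))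
      (sb_symm hxz) hwy
    exact ⟨b, hb, h₂, h₃, h₄, h₁⟩
  · obtain ⟨b, hb, h₁, h₂, h₃, h₄⟩ := cross_all hnc (i := y) (j := z) (k := w) (l := x)
      (Fin.lt_def.mpr (by omega)) (Fin.lt_def.mpr (by omega)) (Fin.lt_def.mpr (by omega))
      (sb_symm hwy) (sb_symm hxz)
    exact ⟨b, hb, h₃, h₄, h₁, h₂⟩
  · obtain ⟨b, hb, h₁, h₂, h₃, h₄⟩ := cross_all hnc (i := x) (j := y) (k := z) (l := w)
      (Fin.lt_def.mpr (by omega)) (Fin.lt_def.mpr (by omega)) (Fin.lt_def.mpr (by omega))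
      hxz (sb_symm hwy)
    exact ⟨b, hb, h₄, h₁, h₂, h₃⟩
  · exact cross_all hnc (Fin.lt_def.mpr (by omega)) (Fin.lt_def.mpr (by omega))
      (Fin.lt_def.mpr (by omega)) hwy hxz

def PhiBase {m : ℕ} (π : Finpartition (Finset.univ : Finset (Fin (2 * m)))) :
    Fin m → Fin m → Prop :=
  fun k l =>
    SameBlock π (dbl k) (dbl l) ∨ SameBlock π (dbl k) (dbl' l) ∨
    SameBlock π (dbl' k) (dbl l) ∨ SameBlock π (dbl' k) (dbl' l)

lemma phiBase_symm {m : ℕ} {π : Finpartition (Finset.univ : Finset (Fin (2 * m)))} :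
    ∀ a c : Fin m, PhiBase π a c → PhiBase π c a := by
  intro a c h
  rcases h with h | h | h | h
  · exact Or.inl (sb_symm h)
  · exact Or.inr (Or.inr (Or.inl (sb_symm h)))
  · exact Or.inr (Or.inl (sb_symm h))
  · exact Or.inr (Or.inr (Or.inr (sb_symm h)))

lemma eqvgen_iff {α : Type*} {r : α → α → Prop} (hsymm : ∀ a b, r a b → r b a)
    {Q : α → Prop} (hQ : ∀ a b, r a b → Q a → Q b) :
    ∀ a b, Relation.EqvGen r a b → (Q a ↔ Q b) := by
  intro a b h
  induction h with
  | rel a b hab => exact ⟨hQ a b hab, hQ b a (hsymm a b hab)⟩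
  | refl a => exact Iff.rfl
  | symm a b _ ih => exact ih.symm
  | trans a b c _ _ ih1 ih2 => exact ih1.trans ih2

/-- If `{k₁ < ... < k_p}` (cyclically ordered) is a block of `Φ(π)` for a non-crossing
`π` on `[2m]` with even blocks, then `2kᵢ ∼_π 2k_{i+1} − 1` for every `i` (with
`k_{p+1} = k₁`).  Here 1-based `2k` corresponds to `dbl' k` and `2l−1` to `dbl l`. -/
theorem block_of_Phi_connects (m : ℕ) (hm : 0 < m)
    (π : Finpartition (Finset.univ : Finset (Fin (2 * m))))
    (hnc : IsNonCrossing π) (heven : ∀ b ∈ π.parts, Even b.card)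
    (k l : Fin m)
    (hsucc : IsCyclicSuccIn (Finset.univ.filter (fun j => PhiRel π k j)) k l) :
    SameBlock π (dbl' k) (dbl l) := by
  obtain ⟨hkB, hlB, hcase⟩ := hsucc
  obtain ⟨b, hb, hub⟩ := π.exists_mem (Finset.mem_univ (dbl' k))
  have hbcard : 2 ≤ b.card := by
    obtain ⟨t, ht⟩ := heven b hb
    have : 0 < b.card := Finset.card_pos.mpr ⟨_, hub⟩
    omega
  have hne : (b.erase (dbl' k)).Nonempty := by
    rw [← Finset.card_pos, Finset.card_erase_of_mem hub]; omega
  obtain ⟨v, hv, hvmin⟩ :=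
    Finset.exists_min_image (b.erase (dbl' k)) (fun x => (x - dbl' k).val) hne
  have hvb : v ∈ b := Finset.mem_of_mem_erase hv
  have hvu : v ≠ dbl' k := Finset.ne_of_mem_erase hv
  have hd0 : 0 < (v - dbl' k).val :=
    Nat.pos_of_ne_zero (fun h => hvu (sub_val_zero_iff.mp h))
  have hdlt : (v - dbl' k).val < 2 * m := (v - dbl' k).isLt
  -- I is closed under π-blocks
  have hclosure : ∀ x y : Fin (2 * m), 0 < (x - dbl' k).val →
      (x - dbl' k).val < (v - dbl' k).val → SameBlock π x y →
      0 < (y - dbl' k).val ∧ (y - dbl' k).val < (v - dbl' k).val := by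
    intro x y hx1 hx2 hxy
    have hxu : x ≠ dbl' k := by
      rintro rfl
      have h0 : (dbl' k - dbl' k).val = 0 := sub_val_zero_iff.mpr rfl
      omega
    have hxb : x ∉ b := by
      intro h
      have := hvmin x (Finset.mem_erase.mpr ⟨hxu, h⟩)
      omega
    rcases eq_or_ne y (dbl' k) with rfl | hyu
    · exact absurd (sb_block hb hub (sb_symm hxy)) hxb
    have hy1 : 0 < (y - dbl' k).val :=
      Nat.pos_of_ne_zero (fun h => hyu (sub_val_zero_iff.mp h))
    refine ⟨hy1, ?_⟩
    by_contra hcon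
    push_neg at hcon
    rcases eq_or_lt_of_le hcon with heq | hlt
    · have : v = y := sub_val_inj heq
      subst this
      exact hxb (sb_block hb hvb (sb_symm hxy))
    · obtain ⟨b', hb', hw', hx', -, -⟩ := cross_cyc hnc (dbl' k)
        (w := dbl' k) (x := x) (y := v) (z := y)
        (by have h0 : (dbl' k - dbl' k).val = 0 := sub_val_zero_iff.mpr rfl; omega)
        hx2 hlt ⟨b, hb, hub, hvb⟩ hxy
      have : b' = b := π.eq_of_mem_parts hb' hb hw' hub
      exact hxb (this ▸ hx')
  -- cardinality of the open interval
  set I := Finset.univ.filter (fun x : Fin (2 * m) =>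
    0 < (x - dbl' k).val ∧ (x - dbl' k).val < (v - dbl' k).val) with hI
  have hIcard : I.card = (v - dbl' k).val - 1 := by
    rw [show (v - dbl' k).val - 1 = (Finset.Ioo 0 ((v - dbl' k).val)).card by
      rw [Nat.card_Ioo]; omega]
    apply Finset.card_bij (fun x _ => (x - dbl' k).val)
    · intro a ha
      simp only [hI, Finset.mem_filter] at ha
      exact Finset.mem_Ioo.mpr ⟨ha.2.1, ha.2.2⟩
    · intro a _ a' _ h; exact sub_val_inj h
    · intro n hn
      rw [Finset.mem_Ioo] at hn
      have hnN : n < 2 * m := lt_trans hn.2 hdlt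
      refine ⟨⟨n, hnN⟩ + dbl' k, ?_, ?_⟩
      · simp only [hI, Finset.mem_filter, add_sub_cancel_fin]
        exact ⟨Finset.mem_univ _, hn.1, hn.2⟩
      · rw [add_sub_cancel_fin]
  have hIeven : Even I.card := by
    have hrw : I = π.parts.biUnion (fun p => p ∩ I) := by
      ext x
      simp only [Finset.mem_biUnion, Finset.mem_inter]
      constructor
      · intro hx
        obtain ⟨p, hp, hxp⟩ := π.exists_mem (Finset.mem_univ x)
        exact ⟨p, hp, hxp, hx⟩
      · rintro ⟨p, -, -, hx⟩; exact hx
    rw [hrw, Finset.card_biUnion]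
    · apply Finset.even_sum
      intro p hp
      rcases Finset.eq_empty_or_nonempty (p ∩ I) with he | ⟨x, hx⟩
      · simp [he]
      · have hpI : p ∩ I = p := by
          rw [Finset.inter_eq_left]
          intro z hz
          rw [Finset.mem_inter] at hx
          have hxI := hx.2
          simp only [hI, Finset.mem_filter] at hxI ⊢
          exact ⟨Finset.mem_univ z, hclosure x z hxI.2.1 hxI.2.2 ⟨p, hp, hx.1, hz⟩⟩
        rw [hpI]; exact heven p hp
    · intro p hp q hq hpq
      exact Disjoint.mono Finset.inter_subset_left Finset.inter_subset_left
        (π.disjoint hp hq hpq)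
  -- parity of v
  have hdodd : (v - dbl' k).val % 2 = 1 := by
    obtain ⟨t, ht⟩ := hIeven
    rw [hIcard] at ht
    omega
  have hvval : v.val % 2 = 0 := by
    have hd' := sub_val_eq v (dbl' k)
    have huval : (dbl' k).val = 2 * k.val + 1 := rfl
    rw [huval] at hd'
    have h1 := v.isLt; have h2 := k.isLt
    split at hd' <;> omega
  set l₀ : Fin m := ⟨v.val / 2, by have := v.isLt; omega⟩ with hl₀
  have hdbll₀ : dbl l₀ = v := by
    apply Fin.ext
    show 2 * (v.val / 2) = v.val
    omega
  have hsbkl₀ : SameBlock π (dbl' k) (dbl l₀) := ⟨b, hb, hub, hdbll₀ ▸ hvb⟩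
  have hrel : PhiRel π k l₀ :=
    Relation.EqvGen.rel _ _ (Or.inr (Or.inr (Or.inl hsbkl₀)))
  have hl₀B : l₀ ∈ Finset.univ.filter (fun j => PhiRel π k j) :=
    Finset.mem_filter.mpr ⟨Finset.mem_univ _, hrel⟩
  -- coordinate formulas
  have hA : ∀ j : Fin m, (dbl' j - dbl' k).val = 2 * (j - k).val := by
    intro j
    have hj := j.isLt; have hk := k.isLt
    have e := sub_val_eq j k
    rw [sub_val_eq, e]
    show (if (dbl' k).val ≤ (dbl' j).val then (dbl' j).val - (dbl' k).val
        else (dbl' j).val + 2 * m - (dbl' k).val) = _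
    have e1 : (dbl' j).val = 2 * j.val + 1 := rfl
    have e2 : (dbl' k).val = 2 * k.val + 1 := rfl
    rw [e1, e2]
    split_ifs <;> omega
  have hB : ∀ j : Fin m, (dbl j - dbl' k).val =
      (if (j - k).val = 0 then 2 * m - 1 else 2 * (j - k).val - 1) := by
    intro j
    have hj := j.isLt; have hk := k.isLt
    have e := sub_val_eq j k
    rw [sub_val_eq, e]
    show (if (dbl' k).val ≤ (dbl j).val then (dbl j).val - (dbl' k).val
        else (dbl j).val + 2 * m - (dbl' k).val) = _
    have e1 : (dbl j).val = 2 * j.val := rfl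
    have e2 : (dbl' k).val = 2 * k.val + 1 := rfl
    rw [e1, e2]
    split_ifs <;> omega
  have hd2 : (v - dbl' k).val =
      (if (l₀ - k).val = 0 then 2 * m - 1 else 2 * (l₀ - k).val - 1) := by
    rw [← hdbll₀]; exact hB l₀
  rcases hcase with ⟨hBsingle, hlk0⟩ | ⟨hlk, hmin⟩
  · have hl₀k : l₀ = k := by
      have := hl₀B
      rw [hBsingle] at this
      exact Finset.mem_singleton.mp this
    rw [hlk0]
    exact hl₀k ▸ hsbkl₀
  · by_cases hs : (l₀ - k).val = 0
    · -- b = {dbl' k, v} with v = dbl k; B = {k}, contradiction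
      have hl₀k : l₀ = k := sub_val_zero_iff.mp hs
      have hd21 : (v - dbl' k).val = 2 * m - 1 := by rw [hd2, if_pos hs]
      have hvk : v = dbl k := by rw [← hdbll₀, hl₀k]
      have hbsub : ∀ x ∈ b, x = dbl' k ∨ x = v := by
        intro x hxb
        rcases eq_or_ne x (dbl' k) with h | h
        · exact Or.inl h
        · right
          have h1 := hvmin x (Finset.mem_erase.mpr ⟨h, hxb⟩)
          have h2 := (x - dbl' k).isLt
          exact (sub_val_inj (show (v - dbl' k).val = (x - dbl' k).val by omega)).symm
      have hmem : ∀ z ∈ b, z.val = 2 * k.val ∨ z.val = 2 * k.val + 1 := by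
        intro z hz
        rcases hbsub z hz with rfl | rfl
        · exact Or.inr rfl
        · left; rw [hvk]; rfl
      have hstep : ∀ x y : Fin m, PhiBase π x y → x = k → y = k := by
        intro x y hxy hxk
        rw [hxk] at hxy
        have hdkb : dbl k ∈ b := hvk ▸ hvb
        rcases hxy with h | h | h | h
        · have := hmem _ (sb_block hb hdkb h)
          have e : (dbl y).val = 2 * y.val := rfl
          exact Fin.ext (by omega)
        · have := hmem _ (sb_block hb hdkb h)
          have e : (dbl' y).val = 2 * y.val + 1 := rfl
          exact Fin.ext (by omega)
        · have := hmem _ (sb_block hb hub h)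
          have e : (dbl y).val = 2 * y.val := rfl
          exact Fin.ext (by omega)
        · have := hmem _ (sb_block hb hub h)
          have e : (dbl' y).val = 2 * y.val + 1 := rfl
          exact Fin.ext (by omega)
      have hPhil : Relation.EqvGen (PhiBase π) k l := (Finset.mem_filter.mp hlB).2
      have : l = k := (eqvgen_iff phiBase_symm hstep k l hPhil).mp rfl
      exact absurd this hlk
    · -- main case
      have hsm := (l₀ - k).isLt
      have hd2' : (v - dbl' k).val = 2 * (l₀ - k).val - 1 := by rw [hd2, if_neg hs]
      have hJd : ∀ j : Fin m,
          (0 < (dbl j - dbl' k).val ∧ (dbl j - dbl' k).val < (v - dbl' k).val) ↔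
          (0 < (j - k).val ∧ (j - k).val < (l₀ - k).val) := by
        intro j
        have h1 := hB j
        have hjlt := (j - k).isLt
        rw [h1, hd2']
        split_ifs with h <;> omega
      have hJd' : ∀ j : Fin m,
          (0 < (dbl' j - dbl' k).val ∧ (dbl' j - dbl' k).val < (v - dbl' k).val) ↔
          (0 < (j - k).val ∧ (j - k).val < (l₀ - k).val) := by
        intro j
        have h1 := hA j
        have hjlt := (j - k).isLt
        rw [h1, hd2']
        omega
      have hstep : ∀ x y : Fin m, PhiBase π x y →
          (0 < (x - k).val ∧ (x - k).val < (l₀ - k).val) →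
          (0 < (y - k).val ∧ (y - k).val < (l₀ - k).val) := by
        intro x y hxy hxJ
        rcases hxy with h | h | h | h
        · exact (hJd y).mp (hclosure _ _ ((hJd x).mpr hxJ).1 ((hJd x).mpr hxJ).2 h)
        · exact (hJd' y).mp (hclosure _ _ ((hJd x).mpr hxJ).1 ((hJd x).mpr hxJ).2 h)
        · exact (hJd y).mp (hclosure _ _ ((hJd' x).mpr hxJ).1 ((hJd' x).mpr hxJ).2 h)
        · exact (hJd' y).mp (hclosure _ _ ((hJd' x).mpr hxJ).1 ((hJd' x).mpr hxJ).2 h)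
      have hPhil : Relation.EqvGen (PhiBase π) k l := (Finset.mem_filter.mp hlB).2
      have hlnot : ¬ (0 < (l - k).val ∧ (l - k).val < (l₀ - k).val) := by
        have hk0 : ¬ (0 < (k - k).val ∧ (k - k).val < (l₀ - k).val) := by
          have h0 : (k - k).val = 0 := sub_val_zero_iff.mpr rfl
          omega
        exact fun hJ => hk0 ((eqvgen_iff phiBase_symm hstep k l hPhil).mpr hJ)
      have hl0 : 0 < (l - k).val :=
        Nat.pos_of_ne_zero (fun h => hlk (sub_val_zero_iff.mp h))
      have hl₀k : l₀ ≠ k := by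
        intro h
        exact hs (by rw [h]; exact sub_val_zero_iff.mpr rfl)
      have hmin' := hmin l₀ hl₀B hl₀k
      have heq : (l - k).val = (l₀ - k).val := by omega
      have : l = l₀ := sub_val_inj heq
      rw [this]
      exact hsbkl₀
end

section
/- Let m ≥ 1 and let σ be a non-crossing pair partition of [2m] (every block has size exactly 2) with blocks of even cardinality, and let π be any non-crossing partition of [2m] with all blocks of even cardinality such that Φ(π) = Φ(σ), where Φ is the quotient map identifying 2k−1 and 2k. Then σ is finer than π: every block of σ is contained in a block of π. -/
open Classical

namespace PFPE

def gen (n : ℕ) (r : ℕ → ℕ → Prop) (x y : ℕ) : Prop :=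
  r x y ∨ (x < n ∧ y < n ∧ x / 2 = y / 2)

def RR (n : ℕ) (r : ℕ → ℕ → Prop) : ℕ → ℕ → Prop :=
  Relation.EqvGen (gen n r)

structure Good (n : ℕ) (r : ℕ → ℕ → Prop) : Prop where
  refl : ∀ x, x < n → r x x
  symm : ∀ {x y}, r x y → r y x
  trans : ∀ {x y z}, r x y → r y z → r x z
  bdd : ∀ {x y}, r x y → x < n ∧ y < n
  nc : ∀ i j k l, i < j → j < k → k < l → l < n → r i k → r j l → r i j

noncomputable def cls (n : ℕ) (r : ℕ → ℕ → Prop) (x : ℕ) : Finset ℕ :=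
  (Finset.range n).filter (r x)

lemma mem_cls {n : ℕ} {r : ℕ → ℕ → Prop} {x y : ℕ} :
    y ∈ cls n r x ↔ y < n ∧ r x y := by
  simp [cls, Finset.mem_filter, Finset.mem_range]

def EvenCls (n : ℕ) (r : ℕ → ℕ → Prop) : Prop := ∀ x, x < n → Even (cls n r x).card
def PairCls (n : ℕ) (r : ℕ → ℕ → Prop) : Prop := ∀ x, x < n → (cls n r x).card = 2

lemma cls_eq {n r} (hG : Good n r) {x y : ℕ} (h : r x y) : cls n r x = cls n r y := by
  ext z
  simp only [mem_cls]
  exact ⟨fun ⟨hz, hz2⟩ => ⟨hz, hG.trans (hG.symm h) hz2⟩, fun ⟨hz, hz2⟩ => ⟨hz, hG.trans h hz2⟩⟩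

theorem eqvgen_map {α β : Type*} {r : α → α → Prop} {r' : β → β → Prop} (f : α → β)
    (h : ∀ x y, r x y → Relation.EqvGen r' (f x) (f y)) :
    ∀ x y, Relation.EqvGen r x y → Relation.EqvGen r' (f x) (f y) := by
  intro x y hxy
  induction hxy with
  | rel x y h' => exact h _ _ h'
  | refl x => exact .refl _
  | symm x y _ ih => exact .symm _ _ ih
  | trans x y z _ _ ih1 ih2 => exact .trans _ _ _ ih1 ih2

theorem eqvgen_invar {α : Type*} {r : α → α → Prop} (P : α → Prop)
    (h : ∀ x y, r x y → (P x ↔ P y)) :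
    ∀ x y, Relation.EqvGen r x y → (P x ↔ P y) := by
  intro x y hxy
  induction hxy with
  | rel x y h' => exact h _ _ h'
  | refl x => exact Iff.rfl
  | symm x y _ ih => exact ih.symm
  | trans x y z _ _ ih1 ih2 => exact ih1.trans ih2

lemma rr_bdd {n r} (hG : Good n r) {x y : ℕ} (h : RR n r x y) (hx : x < n) : y < n := by
  have := eqvgen_invar (fun z => z < n) (fun a b hab => by
    rcases hab with h' | ⟨h1, h2, _⟩
    · exact ⟨fun _ => (hG.bdd h').2, fun _ => (hG.bdd h').1⟩
    · exact ⟨fun _ => h2, fun _ => h1⟩) x y h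
  exact this.mp hx

lemma cls_pair {n r} (hG : Good n r) (hP : PairCls n r) {x y : ℕ} (hxy : r x y)
    (hne : x ≠ y) : cls n r x = {x, y} := by
  have hx : x < n := (hG.bdd hxy).1
  have hy : y < n := (hG.bdd hxy).2
  have hsub : ({x, y} : Finset ℕ) ⊆ cls n r x := by
    intro z hz
    simp only [Finset.mem_insert, Finset.mem_singleton] at hz
    rcases hz with rfl | rfl
    · exact mem_cls.mpr ⟨hx, hG.refl _ hx⟩
    · exact mem_cls.mpr ⟨hy, hxy⟩
  have hcard : ({x, y} : Finset ℕ).card = 2 := Finset.card_pair hne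
  exact ((Finset.eq_of_subset_of_card_le hsub (by rw [hcard, hP x hx])).symm)

lemma int_closed {n r} (hG : Good n r) (hP : PairCls n r) {x y : ℕ} (hxy : r x y)
    (hlt : x < y) : ∀ z w, r z w → x < z → z < y → x < w ∧ w < y := by
  intro z w hzw hxz hzy
  have hy : y < n := (hG.bdd hxy).2
  have hclsx : cls n r x = {x, y} := cls_pair hG hP hxy (by omega)
  by_cases hzwe : z = w
  · omega
  have hclsz : cls n r z = {z, w} := cls_pair hG hP hzw hzwe
  by_contra hcon
  push_neg at hcon
  rcases Nat.lt_or_ge w x with h1 | h2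
  · -- w < x
    have : r w x := hG.nc w x z y h1 hxz hzy hy (hG.symm hzw) hxy
    have : x ∈ cls n r z := mem_cls.mpr ⟨(hG.bdd hxy).1, hG.trans hzw this⟩
    rw [hclsz] at this
    simp only [Finset.mem_insert, Finset.mem_singleton] at this
    omega
  · rcases Nat.lt_or_ge w y with h3 | h4
    · -- x ≤ w < y : then x < w fails only if w = x
      have hwx : w = x := by omega
      have hzx : r z x := hwx ▸ hzw
      have : z ∈ cls n r x := mem_cls.mpr ⟨(hG.bdd hzx).1, hG.symm hzx⟩
      rw [hclsx] at this
      simp only [Finset.mem_insert, Finset.mem_singleton] at this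
      omega
    · rcases Nat.eq_or_lt_of_le h4 with h5 | h5
      · -- w = y
        have : z ∈ cls n r x := by
          have : r y z := hG.symm (h5 ▸ hzw)
          exact mem_cls.mpr ⟨(hG.bdd this).2, hG.trans hxy this⟩
        rw [hclsx] at this
        simp only [Finset.mem_insert, Finset.mem_singleton] at this
        omega
      · -- y < w
        have : r x z := hG.nc x z y w hxz hzy h5 (hG.bdd hzw).2 hxy hzw
        have : z ∈ cls n r x := mem_cls.mpr ⟨(hG.bdd this).2, this⟩
        rw [hclsx] at this
        simp only [Finset.mem_insert, Finset.mem_singleton] at this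
        omega

lemma even_closed {n r} (hG : Good n r) (hE : EvenCls n r) :
    ∀ S : Finset ℕ, (∀ z ∈ S, z < n) → (∀ z ∈ S, ∀ w, r z w → w ∈ S) → Even S.card := by
  intro S
  induction S using Finset.strongInduction with
  | _ S ih =>
  intro hb hcl
  rcases S.eq_empty_or_nonempty with rfl | ⟨z, hz⟩
  · simp
  · have hzn : z < n := hb z hz
    have hsub : cls n r z ⊆ S := by
      intro w hw
      exact hcl z hz w (mem_cls.mp hw).2
    have hss : S \ cls n r z ⊂ S := by
      apply Finset.sdiff_ssubset hsub
      exact ⟨z, mem_cls.mpr ⟨hzn, hG.refl _ hzn⟩⟩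
    have hE1 : Even (S \ cls n r z).card := by
      apply ih _ hss
      · intro w hw; exact hb w (Finset.mem_sdiff.mp hw).1
      · intro w hw v hwv
        obtain ⟨hwS, hwz⟩ := Finset.mem_sdiff.mp hw
        refine Finset.mem_sdiff.mpr ⟨hcl w hwS v hwv, fun hv => hwz ?_⟩
        have : r z v := (mem_cls.mp hv).2
        exact mem_cls.mpr ⟨hb w hwS, hG.trans this (hG.symm hwv)⟩
    have hcard := Finset.card_sdiff_add_card_eq_card hsub
    obtain ⟨c1, hc1⟩ := hE1
    obtain ⟨c2, hc2⟩ := hE z hzn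
    exact ⟨c1 + c2, by omega⟩

lemma width_odd {n r} (hG : Good n r) (hP : PairCls n r) {x y : ℕ} (hxy : r x y)
    (hlt : x < y) : (y - x) % 2 = 1 := by
  have hEv : EvenCls n r := fun u hu => by rw [hP u hu]; exact even_two
  have hy : y < n := (hG.bdd hxy).2
  have : Even (Finset.Ioo x y).card := by
    apply even_closed hG hEv
    · intro z hz; rw [Finset.mem_Ioo] at hz; omega
    · intro z hz w hzw
      rw [Finset.mem_Ioo] at hz
      have := int_closed hG hP hxy hlt z w hzw hz.1 hz.2
      rw [Finset.mem_Ioo]; omega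
  rw [Nat.card_Ioo] at this
  obtain ⟨c, hc⟩ := this
  omega


def del (u s x : ℕ) : ℕ := if x < u then x else x + s

def push (u v s x : ℕ) : ℕ := if x < u then x else if x ≤ v then u - 1 else x - s

lemma del_mono {u s x y : ℕ} (h : x < y) : del u s x < del u s y := by
  unfold del; split_ifs <;> omega

lemma del_mono' {u s x y : ℕ} (h : del u s x < del u s y) : x < y := by
  revert h; unfold del; split_ifs <;> omega

lemma del_cancel {n u v s x : ℕ} (hs : s = v + 1 - u) (huv : u ≤ v) (hv : v < n) (hx : x < n)
    (hC : ¬(u ≤ x ∧ x ≤ v)) : del u s (push u v s x) = x ∧ push u v s x < n - s := by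
  unfold del push; split_ifs <;> omega

section Del

variable {n : ℕ} {r : ℕ → ℕ → Prop} {u v s : ℕ}

lemma del_good (hG : Good n r) (huv : u ≤ v) (hvn : v < n) (hs : s = v + 1 - u) :
    Good (n - s) (fun x y => r (del u s x) (del u s y)) := by
  constructor
  · intro x hx
    apply hG.refl
    unfold del; split_ifs <;> omega
  · intro x y h; exact hG.symm h
  · intro x y z h1 h2; exact hG.trans h1 h2
  · intro x y h
    have h1 := (hG.bdd h).1
    have h2 := (hG.bdd h).2
    revert h1 h2; unfold del; split_ifs <;> omega
  · intro i j k l h1 h2 h3 h4 h5 h6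
    exact hG.nc _ _ _ _ (del_mono h1) (del_mono h2) (del_mono h3)
      (by unfold del; split_ifs <;> omega) h5 h6

lemma del_even (hG : Good n r) (huv : u ≤ v) (hvn : v < n) (hs : s = v + 1 - u)
    (hCcl : ∀ x y, r x y → ((u ≤ x ∧ x ≤ v) ↔ (u ≤ y ∧ y ≤ v)))
    (hE : EvenCls n r) :
    EvenCls (n - s) (fun x y => r (del u s x) (del u s y)) := by
  intro x hx
  have hdx : del u s x < n := by unfold del; split_ifs <;> omega
  have hcard : (cls (n - s) (fun x y => r (del u s x) (del u s y)) x).card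
      = (cls n r (del u s x)).card := by
    apply Finset.card_bij (fun y _ => del u s y)
    · intro y hy
      obtain ⟨hy1, hy2⟩ := mem_cls.mp hy
      exact mem_cls.mpr ⟨by unfold del; split_ifs <;> omega, hy2⟩
    · intro y1 h1 y2 h2 heq
      by_contra hne
      rcases Nat.lt_or_ge y1 y2 with h | h
      · exact absurd heq (Nat.ne_of_lt (del_mono h))
      · rcases Nat.lt_or_ge y2 y1 with h' | h'
        · exact absurd heq.symm (Nat.ne_of_lt (del_mono h'))
        · omega
    · intro z hz
      obtain ⟨hz1, hz2⟩ := mem_cls.mp hz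
      have hzC : ¬(u ≤ z ∧ z ≤ v) := by
        intro hC
        have := (hCcl _ _ hz2).mpr hC
        revert this; unfold del; split_ifs <;> omega
      refine ⟨if z < u then z else z - s, mem_cls.mpr ⟨by split_ifs <;> omega, ?_⟩, ?_⟩
      · have : del u s (if z < u then z else z - s) = z := by unfold del; split_ifs <;> omega
        rw [this]; exact hz2
      · unfold del; split_ifs <;> omega
  rw [hcard]
  exact hE _ hdx

lemma del_lift (hG : Good n r) (huv : u ≤ v) (hvn : v < n) (hs : s = v + 1 - u)
    (hse : s % 2 = 0)
    (hCr : ∀ x y, u ≤ x → x ≤ v → u ≤ y → y ≤ v → r x y) :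
    ∀ x y, gen (n - s) (fun x y => r (del u s x) (del u s y)) x y →
      RR n r (del u s x) (del u s y) := by
  have key : ∀ x y, x < n - s → y < n - s → x / 2 = y / 2 → x < u → u ≤ y →
      RR n r (del u s x) (del u s y) := by
    intro x y hx hy hxy h1 h2
    -- then y = x+1, x = u-1, u odd
    have hx' : x = u - 1 ∧ y = u ∧ u % 2 = 1 := by omega
    have hdx : del u s x = u - 1 := by unfold del; split_ifs <;> omega
    have hdy : del u s y = v + 1 := by unfold del; split_ifs <;> omega
    have hv1 : v + 1 < n := by
      have : del u s y < n := by unfold del; split_ifs <;> omega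
      omega
    rw [hdx, hdy]
    have e1 : RR n r (u - 1) u := .rel _ _ (Or.inr ⟨by omega, by omega, by omega⟩)
    have e2 : RR n r u v := .rel _ _ (Or.inl (hCr u v (by omega) (by omega) (by omega) (by omega)))
    have e3 : RR n r v (v + 1) := .rel _ _ (Or.inr ⟨by omega, hv1, by omega⟩)
    exact .trans _ _ _ (.trans _ _ _ e1 e2) e3
  intro x y hxy
  rcases hxy with h | ⟨hx, hy, hxy2⟩
  · exact .rel _ _ (Or.inl h)
  · rcases Nat.lt_or_ge x u with h1 | h1
    · rcases Nat.lt_or_ge y u with h2 | h2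
      · exact .rel _ _ (Or.inr ⟨by unfold del; split_ifs <;> omega,
          by unfold del; split_ifs <;> omega, by unfold del; split_ifs <;> omega⟩)
      · exact key x y hx hy hxy2 h1 h2
    · rcases Nat.lt_or_ge y u with h2 | h2
      · exact .symm _ _ (key y x hy hx hxy2.symm h2 h1)
      · exact .rel _ _ (Or.inr ⟨by unfold del; split_ifs <;> omega,
          by unfold del; split_ifs <;> omega, by unfold del; split_ifs <;> omega⟩)

lemma del_push (hG : Good n r) (huv : u ≤ v) (hvn : v < n) (hs : s = v + 1 - u)
    (hse : s % 2 = 0)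
    (hCcl : ∀ x y, r x y → ((u ≤ x ∧ x ≤ v) ↔ (u ≤ y ∧ y ≤ v))) :
    ∀ x y, gen n r x y →
      RR (n - s) (fun x y => r (del u s x) (del u s y)) (push u v s x) (push u v s y) := by
  have hkey : ∀ x y, x < n → y < n → x / 2 = y / 2 → x < y →
      RR (n - s) (fun x y => r (del u s x) (del u s y)) (push u v s x) (push u v s y) := by
    intro x y hx hy hxy hlt
    have hyx : y = x + 1 ∧ x % 2 = 0 := by omega
    rcases Nat.lt_or_ge y u with h1 | h1
    · -- both < u
      refine .rel _ _ (Or.inr ⟨?_, ?_, ?_⟩) <;> unfold push <;> split_ifs <;> omega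
    · rcases Nat.lt_or_ge v x with h2 | h2
      · -- both > v
        refine .rel _ _ (Or.inr ⟨?_, ?_, ?_⟩) <;> unfold push <;> split_ifs <;> omega
      · -- group meets [u,v]
        rcases Nat.lt_or_ge x u with h3 | h3
        · -- x < u ≤ y, so y = u, u odd... but x even, y = x+1 odd: u = y odd
          have : push u v s x = push u v s y := by unfold push; split_ifs <;> omega
          rw [this]; exact .refl _
        · rcases Nat.lt_or_ge v y with h4 | h4
          · -- x = v < y, v even, u odd
            have hp1 : push u v s x = u - 1 := by unfold push; split_ifs <;> omega
            have hp2 : push u v s y = u := by unfold push; split_ifs <;> omega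
            rw [hp1, hp2]
            refine .rel _ _ (Or.inr ⟨by omega, by omega, by omega⟩)
          · -- both in [u,v]
            have : push u v s x = push u v s y := by unfold push; split_ifs <;> omega
            rw [this]; exact .refl _
  intro x y hxy
  rcases hxy with h | ⟨hx, hy, hxy2⟩
  · by_cases hin : u ≤ x ∧ x ≤ v
    · have hin' := (hCcl _ _ h).mp hin
      have : push u v s x = push u v s y := by unfold push; split_ifs <;> omega
      rw [this]; exact .refl _
    · have hout : ¬(u ≤ x ∧ x ≤ v) := hin
      have hout' : ¬(u ≤ y ∧ y ≤ v) := fun hy' => hout ((hCcl _ _ h).mpr hy')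
      have h1 := del_cancel (n := n) hs huv hvn (hG.bdd h).1 hout
      have h2 := del_cancel (n := n) hs huv hvn (hG.bdd h).2 hout'
      refine .rel _ _ (Or.inl ?_)
      show r (del u s (push u v s x)) (del u s (push u v s y))
      rw [h1.1, h2.1]; exact h
  · rcases Nat.lt_trichotomy x y with h | h | h
    · exact hkey x y hx hy hxy2 h
    · rw [h]; exact .refl _
    · exact .symm _ _ (hkey y x hy hx hxy2.symm h)

end Del

theorem core : ∀ m : ℕ, 0 < m → ∀ r, Good (2*m) r → EvenCls (2*m) r →
    ∀ a b, a % 2 = 1 → b % 2 = 0 → a < b → b < 2*m →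
    (∀ x y, a < x → x < b → RR (2*m) r x y → a < y ∧ y < b) →
    RR (2*m) r a b → r a b := by
  intro m
  induction m using Nat.strong_induction_on with
  | _ m IH =>
  intro hm r hG hE a b ha hb hab hbn hcl hRR
  have hn : 0 < 2*m := by omega
  set n := 2*m with hndef
  -- choose class of minimal width
  obtain ⟨i₀, hi₀r, hmin⟩ := (Finset.range n).exists_min_image
    (fun i => if h : (cls n r i).Nonempty then (cls n r i).max' h - (cls n r i).min' h else 0)
    ⟨b, Finset.mem_range.mpr hbn⟩
  have hi₀ : i₀ < n := Finset.mem_range.mp hi₀r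
  have hCne : (cls n r i₀).Nonempty := ⟨i₀, mem_cls.mpr ⟨hi₀, hG.refl _ hi₀⟩⟩
  set u := (cls n r i₀).min' hCne with hu
  set v := (cls n r i₀).max' hCne with hv
  have hru : r i₀ u := (mem_cls.mp (Finset.min'_mem _ hCne)).2
  have hrv : r i₀ v := (mem_cls.mp (Finset.max'_mem _ hCne)).2
  have huv0 : u ≤ v := Finset.min'_le _ _ (Finset.max'_mem _ hCne)
  have hvn : v < n := (mem_cls.mp (Finset.max'_mem _ hCne)).1
  have hruv : r u v := hG.trans (hG.symm hru) hrv
  -- the minimal class is an interval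
  have hriv : ∀ z, u ≤ z → z ≤ v → r i₀ z := by
    intro z h1 h2
    by_contra hzC
    have hzu : u < z := by
      rcases Nat.eq_or_lt_of_le h1 with h | h
      · exact absurd (h ▸ hru) hzC
      · exact h
    have hzv : z < v := by
      rcases Nat.eq_or_lt_of_le h2 with h | h
      · exact absurd (h.symm ▸ hrv) hzC
      · exact h
    have hzn : z < n := by omega
    have hCz : (cls n r z).Nonempty := ⟨z, mem_cls.mpr ⟨hzn, hG.refl _ hzn⟩⟩
    have hbound : ∀ w ∈ cls n r z, u < w ∧ w < v := by
      intro w hw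
      obtain ⟨hwn, hrzw⟩ := mem_cls.mp hw
      have hwC : ¬ r i₀ w := fun h => hzC (hG.trans h (hG.symm hrzw))
      have hwu : w ≠ u := fun h => hwC (h ▸ hru)
      have hwv : w ≠ v := fun h => hwC (h ▸ hrv)
      rcases Nat.lt_or_ge w u with h3 | h3
      · exfalso
        have : r w u := hG.nc w u z v h3 hzu hzv hvn (hG.symm hrzw) hruv
        exact hwC (hG.trans hru (hG.symm this))
      · rcases Nat.lt_or_ge v w with h4 | h4
        · exfalso
          have : r u z := hG.nc u z v w hzu hzv h4 hwn hruv hrzw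
          exact hzC (hG.trans hru this)
        · omega
    have h1' := hmin z (Finset.mem_range.mpr hzn)
    rw [dif_pos hCne, dif_pos hCz] at h1'
    have hmax : (cls n r z).max' hCz < v := (hbound _ (Finset.max'_mem _ _)).2
    have hmin2 : u < (cls n r z).min' hCz := (hbound _ (Finset.min'_mem _ _)).1
    have hle : (cls n r z).min' hCz ≤ (cls n r z).max' hCz :=
      Finset.min'_le _ _ (Finset.max'_mem _ _)
    omega
  have hCiff : ∀ z, z ∈ cls n r i₀ ↔ (u ≤ z ∧ z ≤ v) := by
    intro z
    constructor
    · intro hz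
      exact ⟨Finset.min'_le _ _ hz, Finset.le_max' _ _ hz⟩
    · intro ⟨h1, h2⟩
      exact mem_cls.mpr ⟨by omega, hriv z h1 h2⟩
  have hCr : ∀ x y, u ≤ x → x ≤ v → u ≤ y → y ≤ v → r x y :=
    fun x y h1 h2 h3 h4 => hG.trans (hG.symm (hriv x h1 h2)) (hriv y h3 h4)
  have hCcl : ∀ x y, r x y → ((u ≤ x ∧ x ≤ v) ↔ (u ≤ y ∧ y ≤ v)) := by
    intro x y hxy
    constructor
    · intro hx
      rw [← hCiff]
      exact mem_cls.mpr ⟨(hG.bdd hxy).2, hG.trans (hriv x hx.1 hx.2) hxy⟩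
    · intro hy
      rw [← hCiff]
      exact mem_cls.mpr ⟨(hG.bdd hxy).1, hG.trans (hriv y hy.1 hy.2) (hG.symm hxy)⟩
  have hCIcc : cls n r i₀ = Finset.Icc u v := by
    ext z; rw [hCiff, Finset.mem_Icc]
  have hcardC : (cls n r i₀).card = v - u + 1 := by rw [hCIcc, Nat.card_Icc]; omega
  obtain ⟨c0, hc0⟩ := hE i₀ hi₀
  have hCeven : (v + 1 - u) % 2 = 0 := by omega
  have huv : u < v := by omega
  by_cases hfull : u = 0 ∧ v = n - 1
  · exact hCr a b (by omega) (by omega) (by omega) (by omega)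
  -- RR-closedness of C when u is even
  have hRRcl : u % 2 = 0 → ∀ x y, RR n r x y → ((u ≤ x ∧ x ≤ v) ↔ (u ≤ y ∧ y ≤ v)) := by
    intro hue x y hxy
    refine eqvgen_invar (fun z => u ≤ z ∧ z ≤ v) ?_ x y hxy
    intro z w hzw
    rcases hzw with h | ⟨h1, h2, h3⟩
    · exact hCcl _ _ h
    · omega
  by_cases haC : u ≤ a ∧ a ≤ v
  · by_cases hbC : u ≤ b ∧ b ≤ v
    · exact hCr a b haC.1 haC.2 hbC.1 hbC.2
    · by_cases hue : u % 2 = 0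
      · exact absurd ((hRRcl hue a b hRR).mp haC) hbC
      · -- u odd; a+1 is in C and in the open interval: contradiction with hcl
        exfalso
        have hav : a < v := by omega
        have ha1 : r (a+1) a := hCr (a+1) a (by omega) (by omega) haC.1 haC.2
        have hne2 : a + 1 ≠ b := fun h => hbC (h ▸ ⟨by omega, by omega⟩)
        have := hcl (a+1) a (by omega) (by omega) (.rel _ _ (Or.inl ha1))
        omega
  · by_cases hbC : u ≤ b ∧ b ≤ v
    · by_cases hue : u % 2 = 0
      · exact absurd ((hRRcl hue a b hRR).mpr hbC) haC
      · exfalso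
        have hub : u < b := by omega
        have hb1 : r (b-1) b := hCr (b-1) b (by omega) (by omega) hbC.1 hbC.2
        have hne2 : b - 1 ≠ a := fun h => haC (h ▸ ⟨by omega, by omega⟩)
        have := hcl (b-1) b (by omega) (by omega) (.rel _ _ (Or.inl hb1))
        omega
    · -- deletion case
      set s := v + 1 - u with hs
      have hse : s % 2 = 0 := hCeven
      have hsn : s < n := by omega
      obtain ⟨t, ht⟩ : ∃ t, s = 2*t := ⟨s/2, by omega⟩
      have htpos : 0 < t := by omega
      have htm : t < m := by omega
      set m' := m - t with hm'def
      have hm' : 0 < m' := by omega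
      have hn' : 2*m' = n - s := by omega
      set r' := fun x y => r (del u s x) (del u s y) with hr'
      have hGood' : Good (2*m') r' := by rw [hn']; exact del_good hG huv0 hvn hs
      have hEven' : EvenCls (2*m') r' := by rw [hn']; exact del_even hG huv0 hvn hs hCcl hE
      have hcanA := del_cancel (n := n) hs huv0 hvn (by omega : a < n) haC
      have hcanB := del_cancel (n := n) hs huv0 hvn (by omega : b < n) hbC
      set a' := push u v s a with ha'def
      set b' := push u v s b with hb'def
      have ha' : a' % 2 = 1 := by unfold a'; unfold push; split_ifs <;> omega
      have hb' : b' % 2 = 0 := by unfold b'; unfold push; split_ifs <;> omega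
      have hab' : a' < b' := by
        have := del_mono' (u := u) (s := s) (x := a') (y := b')
        apply this
        rw [hcanA.1, hcanB.1]; exact hab
      have hb'n : b' < 2*m' := by rw [hn']; exact hcanB.2
      have hcl' : ∀ x y, a' < x → x < b' → RR (2*m') r' x y → a' < y ∧ y < b' := by
        intro x y h1 h2 hR'
        rw [hn'] at hR'
        have hRlift : RR n r (del u s x) (del u s y) :=
          eqvgen_map (del u s) (del_lift hG huv0 hvn hs hse hCr) x y hR'
        have hda : del u s a' = a := hcanA.1
        have hdb : del u s b' = b := hcanB.1
        have hx1 : a < del u s x := hda ▸ del_mono h1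
        have hx2 : del u s x < b := hdb ▸ del_mono h2
        have hy := hcl _ _ hx1 hx2 hRlift
        constructor
        · by_contra hcon
          have : del u s y ≤ a := by
            rcases Nat.lt_or_ge y a' with h | h
            · exact le_of_lt (hda ▸ del_mono h)
            · have : y = a' := by omega
              rw [this, hda]
          omega
        · by_contra hcon
          have : b ≤ del u s y := by
            rcases Nat.lt_or_ge b' y with h | h
            · exact le_of_lt (hdb ▸ del_mono h)
            · have : y = b' := by omega
              rw [this, hdb]
          omega
      have hRR' : RR (2*m') r' a' b' := by
        rw [hn']
        exact eqvgen_map (push u v s) (del_push hG huv0 hvn hs hse hCcl) a b hRR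
      have hres : r' a' b' := IH m' (by omega) hm' r' hGood' hEven' a' b' ha' hb' hab' hb'n hcl' hRR'
      have hres2 : r (del u s a') (del u s b') := hres
      rw [hcanA.1, hcanB.1] at hres2
      exact hres2

def rot (n c z : ℕ) : ℕ := if z + c < n then z + c else z + c - n

def conj (n c : ℕ) (r : ℕ → ℕ → Prop) (x y : ℕ) : Prop :=
  x < n ∧ y < n ∧ r (rot n c x) (rot n c y)

lemma rot_lt {n c z : ℕ} (hz : z < n) (hc : c ≤ n) : rot n c z < n := by
  unfold rot; split_ifs <;> omega

lemma rot_cancel {n c z : ℕ} (hz : z < n) (hc : c ≤ n) :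
    rot n c (rot n (n - c) z) = z := by
  unfold rot; split_ifs <;> omega

lemma rot_inj {n c z w : ℕ} (hz : z < n) (hw : w < n) (hc : c ≤ n)
    (h : rot n c z = rot n c w) : z = w := by
  revert h; unfold rot; split_ifs <;> omega

lemma rot_comp {n c z : ℕ} (hz : z < n) (hc : c + 1 ≤ n) :
    rot n c (rot n 1 z) = rot n (c + 1) z := by
  unfold rot; split_ifs <;> omega

lemma good_iff {n : ℕ} {R R' : ℕ → ℕ → Prop} (h : ∀ x y, R x y ↔ R' x y)
    (hG : Good n R) : Good n R' := by
  constructor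
  · intro z hz; exact (h z z).mp (hG.refl z hz)
  · intro z w hzw; exact (h w z).mp (hG.symm ((h z w).mpr hzw))
  · intro z w u h1 h2; exact (h z u).mp (hG.trans ((h z w).mpr h1) ((h w u).mpr h2))
  · intro z w hzw; exact hG.bdd ((h z w).mpr hzw)
  · intro i j k l h1 h2 h3 h4 h5 h6
    exact (h i j).mp (hG.nc i j k l h1 h2 h3 h4 ((h i k).mpr h5) ((h j l).mpr h6))

lemma good_conj1 {n : ℕ} {R : ℕ → ℕ → Prop} (hG : Good n R) (hn : 0 < n) :
    Good n (conj n 1 R) := by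
  have h1n : (1:ℕ) ≤ n := hn
  constructor
  · intro z hz; exact ⟨hz, hz, hG.refl _ (rot_lt hz h1n)⟩
  · rintro z w ⟨h1, h2, h3⟩; exact ⟨h2, h1, hG.symm h3⟩
  · rintro z w u ⟨h1, h2, h3⟩ ⟨h4, h5, h6⟩; exact ⟨h1, h5, hG.trans h3 h6⟩
  · rintro z w ⟨h1, h2, _⟩; exact ⟨h1, h2⟩
  · rintro i j k l h1 h2 h3 h4 ⟨hi, hk, hik⟩ ⟨hj, hl, hjl⟩
    refine ⟨hi, hj, ?_⟩
    rcases Nat.lt_or_ge (l + 1) n with h5 | h5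
    · -- no wrap
      have e1 : rot n 1 i = i + 1 := by unfold rot; split_ifs <;> omega
      have e2 : rot n 1 j = j + 1 := by unfold rot; split_ifs <;> omega
      have e3 : rot n 1 k = k + 1 := by unfold rot; split_ifs <;> omega
      have e4 : rot n 1 l = l + 1 := by unfold rot; split_ifs <;> omega
      rw [e1, e2]
      rw [e1, e3] at hik
      rw [e2, e4] at hjl
      exact hG.nc (i+1) (j+1) (k+1) (l+1) (by omega) (by omega) (by omega) (by omega) hik hjl
    · -- l = n - 1 wraps to 0
      have hl1 : l = n - 1 := by omega
      have e1 : rot n 1 i = i + 1 := by unfold rot; split_ifs <;> omega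
      have e2 : rot n 1 j = j + 1 := by unfold rot; split_ifs <;> omega
      have e3 : rot n 1 k = k + 1 := by unfold rot; split_ifs <;> omega
      have e4 : rot n 1 l = 0 := by unfold rot; split_ifs <;> omega
      rw [e1, e2]
      rw [e1, e3] at hik
      rw [e2, e4] at hjl
      -- pattern (0, i+1, j+1, k+1)
      have h0 : R 0 (i+1) :=
        hG.nc 0 (i+1) (j+1) (k+1) (by omega) (by omega) (by omega) (by omega)
          (hG.symm hjl) hik
      exact hG.trans (hG.symm h0) (hG.symm hjl)

lemma conj_succ {n c : ℕ} {r : ℕ → ℕ → Prop} (hc : c + 1 ≤ n) :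
    ∀ x y, conj n (c + 1) r x y ↔ conj n 1 (conj n c r) x y := by
  intro x y
  unfold conj
  constructor
  · rintro ⟨h1, h2, h3⟩
    have hn : 0 < n := by omega
    refine ⟨h1, h2, rot_lt h1 (by omega), rot_lt h2 (by omega), ?_⟩
    rw [rot_comp h1 hc, rot_comp h2 hc]
    exact h3
  · rintro ⟨h1, h2, _, _, h3⟩
    rw [rot_comp h1 hc, rot_comp h2 hc] at h3
    exact ⟨h1, h2, h3⟩

lemma conj_good {n : ℕ} {r : ℕ → ℕ → Prop} (hG : Good n r) (hn : 0 < n) :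
    ∀ c, c ≤ n → Good n (conj n c r) := by
  intro c
  induction c with
  | zero =>
    intro _
    refine good_iff (R := r) ?_ hG
    intro x y
    constructor
    · intro h
      have h1 := (hG.bdd h).1
      have h2 := (hG.bdd h).2
      refine ⟨h1, h2, ?_⟩
      have e1 : rot n 0 x = x := by unfold rot; split_ifs <;> omega
      have e2 : rot n 0 y = y := by unfold rot; split_ifs <;> omega
      rw [e1, e2]; exact h
    · rintro ⟨h1, h2, h3⟩
      have e1 : rot n 0 x = x := by unfold rot; split_ifs <;> omega
      have e2 : rot n 0 y = y := by unfold rot; split_ifs <;> omega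
      rwa [e1, e2] at h3
  | succ c ih =>
    intro hc
    have hGc := ih (by omega)
    exact good_iff (fun x y => (conj_succ hc x y).symm) (good_conj1 hGc hn)

lemma conj_cls {n c : ℕ} {r : ℕ → ℕ → Prop} (hG : Good n r) (hc : c ≤ n) {x : ℕ}
    (hx : x < n) :
    (cls n (conj n c r) x).card = (cls n r (rot n c x)).card := by
  apply Finset.card_bij (fun y _ => rot n c y)
  · intro y hy
    obtain ⟨hy1, ⟨_, _, h3⟩⟩ := mem_cls.mp hy
    exact mem_cls.mpr ⟨rot_lt hy1 hc, h3⟩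
  · intro y1 h1 y2 h2 heq
    exact rot_inj (mem_cls.mp h1).1 (mem_cls.mp h2).1 hc heq
  · intro z hz
    obtain ⟨hz1, hz2⟩ := mem_cls.mp hz
    refine ⟨rot n (n - c) z, mem_cls.mpr ⟨rot_lt hz1 (by omega), hx, rot_lt hz1 (by omega), ?_⟩,
      rot_cancel hz1 hc⟩
    rw [rot_cancel hz1 hc]
    exact hz2

lemma rot_grp {n c z w : ℕ} (hz : z < n) (hw : w < n) (hc : c ≤ n) (hce : c % 2 = 0)
    (hne : n % 2 = 0) (h : z / 2 = w / 2) : rot n c z / 2 = rot n c w / 2 := by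
  unfold rot; split_ifs <;> omega

lemma rr_conj {n c : ℕ} {r : ℕ → ℕ → Prop} (hG : Good n r) (hc : c ≤ n)
    (hce : c % 2 = 0) (hne : n % 2 = 0) :
    ∀ x y, x < n → y < n → (RR n (conj n c r) x y ↔ RR n r (rot n c x) (rot n c y)) := by
  intro x y hx hy
  constructor
  · apply eqvgen_map (rot n c)
    intro z w hzw
    rcases hzw with ⟨h1, h2, h3⟩ | ⟨h1, h2, h3⟩
    · exact .rel _ _ (Or.inl h3)
    · exact .rel _ _ (Or.inr ⟨rot_lt h1 hc, rot_lt h2 hc, rot_grp h1 h2 hc hce hne h3⟩)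
  · intro h
    have key : ∀ z w, gen n r z w → RR n (conj n c r) (rot n (n-c) z) (rot n (n-c) w) := by
      intro z w hzw
      rcases hzw with h' | ⟨h1, h2, h3⟩
      · have h1 := (hG.bdd h').1
        have h2 := (hG.bdd h').2
        refine .rel _ _ (Or.inl ⟨rot_lt h1 (by omega), rot_lt h2 (by omega), ?_⟩)
        rw [rot_cancel h1 hc, rot_cancel h2 hc]
        exact h'
      · refine .rel _ _ (Or.inr ⟨rot_lt h1 (by omega), rot_lt h2 (by omega), ?_⟩)
        exact rot_grp h1 h2 (by omega) (by omega) hne h3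
    have := eqvgen_map (rot n (n-c)) key _ _ h
    have e1 : rot n (n-c) (rot n c x) = x := by
      have := rot_cancel (c := n - c) (z := x) hx (by omega)
      rwa [show n - (n - c) = c by omega] at this
    have e2 : rot n (n-c) (rot n c y) = y := by
      have := rot_cancel (c := n - c) (z := y) hy (by omega)
      rwa [show n - (n - c) = c by omega] at this
    rwa [e1, e2] at this

theorem lemA1 (m : ℕ) (hm : 0 < m) (rσ rπ : ℕ → ℕ → Prop)
    (Gσ : Good (2*m) rσ) (Gπ : Good (2*m) rπ) (Pσ : PairCls (2*m) rσ)
    (Eπ : EvenCls (2*m) rπ)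
    (hR : ∀ x y, x < 2*m → y < 2*m → (RR (2*m) rσ x y ↔ RR (2*m) rπ x y)) :
    ∀ x y, x % 2 = 1 → x < y → rσ x y → rπ x y := by
  intro x y hx hlt hσ
  have hyn : y < 2*m := (Gσ.bdd hσ).2
  have hxn : x < 2*m := (Gσ.bdd hσ).1
  have hw := width_odd Gσ Pσ hσ hlt
  have hy : y % 2 = 0 := by omega
  have hclσ : ∀ z w, gen (2*m) rσ z w → ((x < z ∧ z < y) ↔ (x < w ∧ w < y)) := by
    intro z w hzw
    rcases hzw with h | ⟨h1, h2, h3⟩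
    · constructor
      · intro hz; exact int_closed Gσ Pσ hσ hlt z w h hz.1 hz.2
      · intro hw'; exact int_closed Gσ Pσ hσ hlt w z (Gσ.symm h) hw'.1 hw'.2
    · omega
  apply core m hm rπ Gπ Eπ x y hx hy hlt hyn
  · intro z w h1 h2 hRzw
    have hzn : z < 2*m := by omega
    have hwn : w < 2*m := rr_bdd Gπ hRzw hzn
    have hσR : RR (2*m) rσ z w := (hR z w hzn hwn).mpr hRzw
    exact (eqvgen_invar _ hclσ z w hσR).mp ⟨h1, h2⟩
  · exact (hR x y hxn hyn).mp (.rel _ _ (Or.inl hσ))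

theorem main_nat (m : ℕ) (hm : 0 < m) (rσ rπ : ℕ → ℕ → Prop)
    (Gσ : Good (2*m) rσ) (Gπ : Good (2*m) rπ) (Pσ : PairCls (2*m) rσ)
    (Eπ : EvenCls (2*m) rπ)
    (hR : ∀ x y, x < 2*m → y < 2*m → (RR (2*m) rσ x y ↔ RR (2*m) rπ x y)) :
    ∀ x y, rσ x y → rπ x y := by
  have key : ∀ x y, x < y → rσ x y → rπ x y := by
    intro x y hlt hσ
    have hxn : x < 2*m := (Gσ.bdd hσ).1
    have hyn : y < 2*m := (Gσ.bdd hσ).2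
    have hwid := width_odd Gσ Pσ hσ hlt
    by_cases hxp : x % 2 = 1
    · exact lemA1 m hm rσ rπ Gσ Gπ Pσ Eπ hR x y hxp hlt hσ
    · have hxe : x % 2 = 0 := by omega
      have hyo : y % 2 = 1 := by omega
      by_cases hy1 : y = x + 1
      · -- same-group adjacent pair: direct argument
        subst hy1
        have hclsσ : cls (2*m) rσ x = {x, x+1} := cls_pair Gσ Pσ hσ (by omega)
        have hinv : ∀ z w, gen (2*m) rσ z w → ((z = x ∨ z = x+1) ↔ (w = x ∨ w = x+1)) := by
          intro z w hzw
          rcases hzw with h | ⟨h1, h2, h3⟩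
          · have hmem : ∀ z' w', rσ z' w' → (z' = x ∨ z' = x+1) → (w' = x ∨ w' = x+1) := by
              intro z' w' h' hz'
              have hcls : cls (2*m) rσ z' = {x, x+1} := by
                rcases hz' with rfl | rfl
                · exact hclsσ
                · rw [← hclsσ]; exact (cls_eq Gσ hσ).symm
              have : w' ∈ cls (2*m) rσ z' := mem_cls.mpr ⟨(Gσ.bdd h').2, h'⟩
              rw [hcls] at this
              simpa using this
            exact ⟨hmem z w h, hmem w z (Gσ.symm h)⟩
          · omega
        have hsub : cls (2*m) rπ x ⊆ {x, x+1} := by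
          intro w hw
          obtain ⟨hwn, hπw⟩ := mem_cls.mp hw
          have hRR : RR (2*m) rσ x w := (hR x w hxn hwn).mpr (.rel _ _ (Or.inl hπw))
          have := (eqvgen_invar _ hinv x w hRR).mp (Or.inl rfl)
          simpa using this
        have hxcls : x ∈ cls (2*m) rπ x := mem_cls.mpr ⟨hxn, Gπ.refl _ hxn⟩
        obtain ⟨c, hc⟩ := Eπ x hxn
        have hcard_le : (cls (2*m) rπ x).card ≤ 2 :=
          le_trans (Finset.card_le_card hsub) (by simp)
        have hpos : 0 < (cls (2*m) rπ x).card := Finset.card_pos.mpr ⟨x, hxcls⟩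
        have hc2 : ({x, x+1} : Finset ℕ).card ≤ (cls (2*m) rπ x).card := by
          rw [Finset.card_pair (by omega)]; omega
        have hEq : cls (2*m) rπ x = {x, x+1} := Finset.eq_of_subset_of_card_le hsub hc2
        have : x + 1 ∈ cls (2*m) rπ x := by rw [hEq]; simp
        exact (mem_cls.mp this).2
      · -- rotate by y - 1
        set n := 2*m with hndef
        have hne : n % 2 = 0 := by omega
        have hy3 : x + 3 ≤ y := by omega
        set c := y - 1 with hcdef
        have hce : c % 2 = 0 := by omega
        have hcn : c ≤ n := by omega
        have hnn : 0 < n := by omega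
        have Gσ' := conj_good Gσ hnn c hcn
        have Gπ' := conj_good Gπ hnn c hcn
        have Pσ' : PairCls n (conj n c rσ) := by
          intro z hz
          rw [conj_cls Gσ hcn hz]
          exact Pσ _ (rot_lt hz hcn)
        have Eπ' : EvenCls n (conj n c rπ) := by
          intro z hz
          rw [conj_cls Gπ hcn hz]
          exact Eπ _ (rot_lt hz hcn)
        have hR' : ∀ z w, z < n → w < n →
            (RR n (conj n c rσ) z w ↔ RR n (conj n c rπ) z w) := by
          intro z w hz hw
          rw [rr_conj Gσ hcn hce hne z w hz hw, rr_conj Gπ hcn hce hne z w hz hw]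
          exact hR _ _ (rot_lt hz hcn) (rot_lt hw hcn)
        set j' := x + n - y + 1 with hj'def
        have hj1 : 1 < j' := by omega
        have hj2 : j' < n := by omega
        have hrot1 : rot n c 1 = y := by unfold rot; split_ifs <;> omega
        have hrotj : rot n c j' = x := by unfold rot; split_ifs <;> omega
        have hpair : conj n c rσ 1 j' := by
          refine ⟨by omega, hj2, ?_⟩
          rw [hrot1, hrotj]
          exact Gσ.symm hσ
        have hres := lemA1 m hm (conj n c rσ) (conj n c rπ) Gσ' Gπ' Pσ' Eπ' hR'
          1 j' (by omega) hj1 hpair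
        have h2 := hres.2.2
        rw [hrot1, hrotj] at h2
        exact Gπ.symm h2
  intro x y hσ
  rcases Nat.lt_trichotomy x y with h | h | h
  · exact key x y h hσ
  · subst h; exact Gπ.refl _ (Gσ.bdd hσ).1
  · exact Gπ.symm (key y x h (Gσ.symm hσ))

noncomputable section Interface

variable {N : ℕ}

/-- the same-block relation of a finpartition, as a relation on `ℕ`. -/
def rel (P : Finpartition (Finset.univ : Finset (Fin N))) (x y : ℕ) : Prop :=
  ∃ (hx : x < N) (hy : y < N), SameBlock P ⟨x, hx⟩ ⟨y, hy⟩

lemma good_rel (P : Finpartition (Finset.univ : Finset (Fin N)))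
    (hnc : IsNonCrossing P) : Good N (rel P) := by
  constructor
  · intro x hx
    obtain ⟨b, hb, hxb⟩ := P.exists_mem (Finset.mem_univ (⟨x, hx⟩ : Fin N))
    exact ⟨hx, hx, b, hb, hxb, hxb⟩
  · rintro x y ⟨hx, hy, b, hb, h1, h2⟩
    exact ⟨hy, hx, b, hb, h2, h1⟩
  · rintro x y z ⟨hx, hy, b, hb, h1, h2⟩ ⟨hy', hz, c, hc, h3, h4⟩
    have hbc : b = c := P.eq_of_mem_parts hb hc h2 h3
    exact ⟨hx, hz, b, hb, h1, hbc ▸ h4⟩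
  · rintro x y ⟨hx, hy, _⟩
    exact ⟨hx, hy⟩
  · rintro i j k l h1 h2 h3 h4 ⟨hi, hk, hik⟩ ⟨hj, hl, hjl⟩
    have hi' : i < N := by omega
    have hj' : j < N := by omega
    have := hnc ⟨i, hi'⟩ ⟨j, hj'⟩ ⟨k, hk⟩ ⟨l, hl⟩
      (by simp [Fin.mk_lt_mk]; omega) (by simp [Fin.mk_lt_mk]; omega)
      (by simp [Fin.mk_lt_mk]; omega) hik hjl
    exact ⟨hi', hj', this⟩

lemma cls_rel_card (P : Finpartition (Finset.univ : Finset (Fin N))) (x : ℕ) (hx : x < N)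
    (b : Finset (Fin N)) (hb : b ∈ P.parts) (hxb : (⟨x, hx⟩ : Fin N) ∈ b) :
    (cls N (rel P) x).card = b.card := by
  apply Finset.card_bij (fun y hy => (⟨y, (mem_cls.mp hy).1⟩ : Fin N))
  · intro y hy
    obtain ⟨hyN, hx', hy', c, hc, h1, h2⟩ := mem_cls.mp hy
    have : b = c := P.eq_of_mem_parts hb hc hxb h1
    exact this ▸ h2
  · intro y1 h1 y2 h2 heq
    exact congrArg Fin.val heq
  · intro j hj
    exact ⟨j.val, mem_cls.mpr ⟨j.isLt, hx, j.isLt, b, hb, hxb, hj⟩, rfl⟩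

end Interface

section Phi

variable {m : ℕ} (hm : 0 < m)

/-- halving map -/
def hf (m : ℕ) (hm : 0 < m) (z : ℕ) : Fin m := ⟨z / 2 % m, Nat.mod_lt _ hm⟩

lemma hf_val {z : ℕ} (hz : z < 2*m) : (hf m hm z).val = z / 2 := by
  show z / 2 % m = z / 2
  exact Nat.mod_eq_of_lt (by omega)

lemma phi_of_rr (P : Finpartition (Finset.univ : Finset (Fin (2*m)))) :
    ∀ x y, RR (2*m) (rel P) x y → PhiRel P (hf m hm x) (hf m hm y) := by
  apply eqvgen_map (hf m hm)
  intro x y hxy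
  rcases hxy with ⟨hx, hy, hsb⟩ | ⟨hx, hy, hxy2⟩
  · rcases Nat.mod_two_eq_zero_or_one x with hex | hox <;> rcases Nat.mod_two_eq_zero_or_one y with hey | hoy
    · have e1 : dbl (hf m hm x) = (⟨x, hx⟩ : Fin (2*m)) := by
        apply Fin.ext; show 2 * (hf m hm x).val = x; rw [hf_val hm hx]; omega
      have e2 : dbl (hf m hm y) = (⟨y, hy⟩ : Fin (2*m)) := by
        apply Fin.ext; show 2 * (hf m hm y).val = y; rw [hf_val hm hy]; omega
      exact .rel _ _ (Or.inl (by rw [e1, e2]; exact hsb))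
    · have e1 : dbl (hf m hm x) = (⟨x, hx⟩ : Fin (2*m)) := by
        apply Fin.ext; show 2 * (hf m hm x).val = x; rw [hf_val hm hx]; omega
      have e2 : dbl' (hf m hm y) = (⟨y, hy⟩ : Fin (2*m)) := by
        apply Fin.ext; show 2 * (hf m hm y).val + 1 = y; rw [hf_val hm hy]; omega
      exact .rel _ _ (Or.inr (Or.inl (by rw [e1, e2]; exact hsb)))
    · have e1 : dbl' (hf m hm x) = (⟨x, hx⟩ : Fin (2*m)) := by
        apply Fin.ext; show 2 * (hf m hm x).val + 1 = x; rw [hf_val hm hx]; omega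
      have e2 : dbl (hf m hm y) = (⟨y, hy⟩ : Fin (2*m)) := by
        apply Fin.ext; show 2 * (hf m hm y).val = y; rw [hf_val hm hy]; omega
      exact .rel _ _ (Or.inr (Or.inr (Or.inl (by rw [e1, e2]; exact hsb))))
    · have e1 : dbl' (hf m hm x) = (⟨x, hx⟩ : Fin (2*m)) := by
        apply Fin.ext; show 2 * (hf m hm x).val + 1 = x; rw [hf_val hm hx]; omega
      have e2 : dbl' (hf m hm y) = (⟨y, hy⟩ : Fin (2*m)) := by
        apply Fin.ext; show 2 * (hf m hm y).val + 1 = y; rw [hf_val hm hy]; omega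
      exact .rel _ _ (Or.inr (Or.inr (Or.inr (by rw [e1, e2]; exact hsb))))
  · have : hf m hm x = hf m hm y := by
      apply Fin.ext; show x / 2 % m = y / 2 % m; rw [hxy2]
    rw [this]
    exact .refl _

lemma rr_of_phi (P : Finpartition (Finset.univ : Finset (Fin (2*m)))) :
    ∀ k l : Fin m, PhiRel P k l → RR (2*m) (rel P) (2 * k.val) (2 * l.val) := by
  apply eqvgen_map (fun k : Fin m => 2 * k.val)
  intro k l hkl
  have hk := k.isLt
  have hl := l.isLt
  have gk : RR (2*m) (rel P) (2*k.val) (2*k.val+1) :=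
    .rel _ _ (Or.inr ⟨by omega, by omega, by omega⟩)
  have gl : RR (2*m) (rel P) (2*l.val) (2*l.val+1) :=
    .rel _ _ (Or.inr ⟨by omega, by omega, by omega⟩)
  rcases hkl with h | h | h | h
  · exact .rel _ _ (Or.inl ⟨by omega, by omega, h⟩)
  · exact .trans _ _ _ (.rel _ _ (Or.inl ⟨by omega, by omega, h⟩)) (.symm _ _ gl)
  · exact .trans _ _ _ gk (.rel _ _ (Or.inl ⟨by omega, by omega, h⟩))
  · exact .trans _ _ _ (.trans _ _ _ gk (.rel _ _ (Or.inl ⟨by omega, by omega, h⟩)))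
      (.symm _ _ gl)

lemma rr_iff_phi (P : Finpartition (Finset.univ : Finset (Fin (2*m)))) {x y : ℕ}
    (hx : x < 2*m) (hy : y < 2*m) :
    RR (2*m) (rel P) x y ↔ PhiRel P (hf m hm x) (hf m hm y) := by
  constructor
  · exact phi_of_rr hm P x y
  · intro h
    have h1 := rr_of_phi P _ _ h
    rw [hf_val hm hx, hf_val hm hy] at h1
    have gx : RR (2*m) (rel P) x (2*(x/2)) :=
      .rel _ _ (Or.inr ⟨hx, by omega, by omega⟩)
    have gy : RR (2*m) (rel P) y (2*(y/2)) :=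
      .rel _ _ (Or.inr ⟨hy, by omega, by omega⟩)
    exact .trans _ _ _ (.trans _ _ _ gx h1) (.symm _ _ gy)

end Phi

end PFPE

/-- Let `σ` be a non-crossing pair partition of `[2m]` (all blocks of size 2) and `π`
a non-crossing partition of `[2m]` with all blocks of even cardinality, such that
`Φ(π) = Φ(σ)` (the quotient partitions identifying `2k−1` with `2k` coincide).  Then
`σ` is finer than `π`: any two `σ`-equivalent elements are `π`-equivalent. -/
theorem pairing_finer_of_Phi_eq (m : ℕ) (hm : 0 < m)
    (σ π : Finpartition (Finset.univ : Finset (Fin (2 * m))))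
    (hσnc : IsNonCrossing σ) (hσpair : ∀ b ∈ σ.parts, b.card = 2)
    (hπnc : IsNonCrossing π) (hπeven : ∀ b ∈ π.parts, Even b.card)
    (hPhi : ∀ k l : Fin m, PhiRel π k l ↔ PhiRel σ k l) :
    ∀ i j : Fin (2 * m), SameBlock σ i j → SameBlock π i j := by
  have Gσ := PFPE.good_rel σ hσnc
  have Gπ := PFPE.good_rel π hπnc
  have Pσ : PFPE.PairCls (2*m) (PFPE.rel σ) := by
    intro x hx
    obtain ⟨b, hb, hxb⟩ := σ.exists_mem (Finset.mem_univ (⟨x, hx⟩ : Fin (2*m)))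
    rw [PFPE.cls_rel_card σ x hx b hb hxb]
    exact hσpair b hb
  have Eπ : PFPE.EvenCls (2*m) (PFPE.rel π) := by
    intro x hx
    obtain ⟨b, hb, hxb⟩ := π.exists_mem (Finset.mem_univ (⟨x, hx⟩ : Fin (2*m)))
    rw [PFPE.cls_rel_card π x hx b hb hxb]
    exact hπeven b hb
  have hR : ∀ x y, x < 2*m → y < 2*m →
      (PFPE.RR (2*m) (PFPE.rel σ) x y ↔ PFPE.RR (2*m) (PFPE.rel π) x y) := by
    intro x y hx hy
    rw [PFPE.rr_iff_phi hm σ hx hy, PFPE.rr_iff_phi hm π hx hy]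
    exact (hPhi _ _).symm
  intro i j hij
  have h := PFPE.main_nat m hm _ _ Gσ Gπ Pσ Eπ hR i.val j.val ⟨i.isLt, j.isLt, hij⟩
  obtain ⟨hx, hy, hsb⟩ := h
  exact hsb
end

section
/- Suppose [2N] is divided into k ≥ 2 non-empty consecutive intervals S₁,...,S_k, and let σ be a non-crossing partition of [2N] into pairs such that no pair of σ connects two elements of the same interval Sᵢ. Define Q(π), for any non-crossing partition π of [2N] with all blocks of even size, to be the non-crossing pair partition obtained by replacing each block {k₁ < k₂ < ... < k_{2p}} of π by the pairs {k₁,k₂}, {k₃,k₄}, ..., {k_{2p−1},k_{2p}}. Then the number of non-crossing partitions π of [2N] (with blocks of even size) that connect no two elements of a same interval Sᵢ and satisfy Q(π) = σ is at most 4^{k−2}; moreover, for every such π, at most 2k − 4 elements of [2N] lie in a block of π that is not a pair. -/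
open Classical

/-- `Q(π) = σ`: `σ` is obtained from `π` (a non-crossing partition with blocks of even
size) by replacing each block `{k₁ < k₂ < ... < k_{2p}}` by the pairs
`{k₁,k₂}, {k₃,k₄}, ..., {k_{2p−1},k_{2p}}`.  Equivalently, for `i < j`: `{i,j}` is a
pair of `σ` iff `j` is the successor of `i` in its `π`-block and the number of elements
of that block below `i` is even. -/
def QEq {N : ℕ} (π σ : Finpartition (Finset.univ : Finset (Fin N))) : Prop :=
  ∀ i j : Fin N, i < j →
    (SameBlock σ i j ↔
      (SameBlock π i j ∧ (∀ x, i < x → x < j → ¬ SameBlock π i x) ∧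
        Even ((Finset.univ.filter (fun x => SameBlock π i x ∧ x < i)).card)))

namespace FiberProof

variable {n k : ℕ}

/-- elements of the block of `x` strictly below `x` -/
noncomputable def belowSet (P : Finpartition (Finset.univ : Finset (Fin n))) (x : Fin n) :
    Finset (Fin n) :=
  Finset.univ.filter (fun v => SameBlock P x v ∧ v < x)

/-- elements of the block of `x` strictly above `x` -/
noncomputable def aboveSet (P : Finpartition (Finset.univ : Finset (Fin n))) (x : Fin n) :
    Finset (Fin n) :=
  Finset.univ.filter (fun v => SameBlock P x v ∧ x < v)

noncomputable def cnt (P : Finpartition (Finset.univ : Finset (Fin n))) (x : Fin n) : ℕ :=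
  (belowSet P x).card

/-- the set of elements which have block-mates on both sides -/
noncomputable def Dset (P : Finpartition (Finset.univ : Finset (Fin n))) : Finset (Fin n) :=
  Finset.univ.filter (fun x => (belowSet P x).Nonempty ∧ (aboveSet P x).Nonempty)

section Basic

variable {P : Finpartition (Finset.univ : Finset (Fin n))}

lemma sb_refl (P : Finpartition (Finset.univ : Finset (Fin n))) (x : Fin n) :
    SameBlock P x x := by
  obtain ⟨t, ht, hxt⟩ := P.exists_mem (Finset.mem_univ x)
  exact ⟨t, ht, hxt, hxt⟩

lemma sb_symm {x y : Fin n} (h : SameBlock P x y) : SameBlock P y x := by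
  obtain ⟨t, ht, hx, hy⟩ := h
  exact ⟨t, ht, hy, hx⟩

lemma sb_trans {x y z : Fin n} (h : SameBlock P x y) (h' : SameBlock P y z) :
    SameBlock P x z := by
  obtain ⟨t, ht, hx, hy⟩ := h
  obtain ⟨u, hu, hy', hz⟩ := h'
  cases P.eq_of_mem_parts ht hu hy hy'
  exact ⟨t, ht, hx, hz⟩

lemma mem_belowSet {x v : Fin n} : v ∈ belowSet P x ↔ SameBlock P x v ∧ v < x := by
  simp [belowSet]

lemma mem_aboveSet {x v : Fin n} : v ∈ aboveSet P x ↔ SameBlock P x v ∧ x < v := by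
  simp [aboveSet]

lemma mem_Dset {x : Fin n} :
    x ∈ Dset P ↔ (belowSet P x).Nonempty ∧ (aboveSet P x).Nonempty := by
  simp [Dset]

/-- the least element of the block of `x` above `x` -/
noncomputable def nxt (P : Finpartition (Finset.univ : Finset (Fin n))) (x : Fin n)
    (h : (aboveSet P x).Nonempty) : Fin n :=
  (aboveSet P x).min' h

/-- the greatest element of the block of `x` below `x` -/
noncomputable def prv (P : Finpartition (Finset.univ : Finset (Fin n))) (x : Fin n)
    (h : (belowSet P x).Nonempty) : Fin n :=
  (belowSet P x).max' h

lemma nxt_spec {x : Fin n} (h : (aboveSet P x).Nonempty) :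
    SameBlock P x (nxt P x h) ∧ x < nxt P x h := by
  have := (aboveSet P x).min'_mem h
  rwa [mem_aboveSet] at this

lemma nxt_min {x z : Fin n} (h : (aboveSet P x).Nonempty) (hz : SameBlock P x z) (hxz : x < z) :
    nxt P x h ≤ z :=
  (aboveSet P x).min'_le z (mem_aboveSet.2 ⟨hz, hxz⟩)

lemma prv_spec {x : Fin n} (h : (belowSet P x).Nonempty) :
    SameBlock P x (prv P x h) ∧ prv P x h < x := by
  have := (belowSet P x).max'_mem h
  rwa [mem_belowSet] at this

lemma prv_max {x z : Fin n} (h : (belowSet P x).Nonempty) (hz : SameBlock P x z) (hxz : z < x) :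
    z ≤ prv P x h :=
  (belowSet P x).le_max' z (mem_belowSet.2 ⟨hz, hxz⟩)

lemma nothing_between_nxt {x z : Fin n} (h : (aboveSet P x).Nonempty)
    (h1 : x < z) (h2 : z < nxt P x h) : ¬ SameBlock P x z := by
  intro hs
  exact absurd (nxt_min h hs h1) (not_le.2 h2)

/-- counting lemma: `cnt` of the predecessor -/
lemma cnt_prv {x : Fin n} (h : (belowSet P x).Nonempty) :
    cnt P (prv P x h) = cnt P x - 1 := by
  obtain ⟨hsb, hlt⟩ := prv_spec h
  have : belowSet P (prv P x h) = (belowSet P x).erase (prv P x h) := by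
    ext v
    rw [mem_belowSet, Finset.mem_erase, mem_belowSet]
    constructor
    · rintro ⟨hvb, hv⟩
      exact ⟨ne_of_lt hv, sb_trans hsb hvb, lt_trans hv hlt⟩
    · rintro ⟨hne, hvb, hv⟩
      refine ⟨sb_trans (sb_symm hsb) hvb, ?_⟩
      exact lt_of_le_of_ne (prv_max h hvb hv) hne
  rw [cnt, this, Finset.card_erase_of_mem (mem_belowSet.2 ⟨hsb, hlt⟩)]
  rfl

lemma nxt_prv {x : Fin n} (h : (belowSet P x).Nonempty)
    (h' : (aboveSet P (prv P x h)).Nonempty) : nxt P (prv P x h) h' = x := by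
  obtain ⟨hsb, hlt⟩ := prv_spec h
  apply le_antisymm
  · exact nxt_min h' (sb_symm hsb) hlt
  · obtain ⟨hsb', hlt'⟩ := nxt_spec h'
    by_contra hx
    push_neg at hx
    have : nxt P (prv P x h) h' ≤ prv P x h :=
      prv_max h (sb_trans hsb hsb') hx
    exact absurd hlt' (not_lt.2 this)

lemma above_prv_nonempty {x : Fin n} (h : (belowSet P x).Nonempty) :
    (aboveSet P (prv P x h)).Nonempty := by
  obtain ⟨hsb, hlt⟩ := prv_spec h
  exact ⟨x, mem_aboveSet.2 ⟨sb_symm hsb, hlt⟩⟩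

lemma cnt_nxt {x : Fin n} (h : (aboveSet P x).Nonempty) :
    cnt P (nxt P x h) = cnt P x + 1 := by
  obtain ⟨hsb, hlt⟩ := nxt_spec h
  have : belowSet P (nxt P x h) = insert x (belowSet P x) := by
    ext v
    rw [mem_belowSet, Finset.mem_insert, mem_belowSet]
    constructor
    · rintro ⟨hvb, hv⟩
      rcases lt_trichotomy v x with h1 | h1 | h1
      · exact Or.inr ⟨sb_trans hsb hvb, h1⟩
      · exact Or.inl h1
      · exact absurd (sb_trans hsb hvb) (nothing_between_nxt h h1 hv)
    · rintro (rfl | ⟨hvb, hv⟩)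
      · exact ⟨sb_symm hsb, hlt⟩
      · exact ⟨sb_trans (sb_symm hsb) hvb, lt_trans hv hlt⟩
  rw [cnt, this, Finset.card_insert_of_notMem]
  · rfl
  · rw [mem_belowSet]
    rintro ⟨-, hx⟩
    exact lt_irrefl x hx

/-- the class of `x` as a finset -/
lemma part_eq_class {b : Finset (Fin n)} (hb : b ∈ P.parts) {x : Fin n} (hx : x ∈ b) :
    b = Finset.univ.filter (fun y => SameBlock P x y) := by
  ext y
  simp only [Finset.mem_filter, Finset.mem_univ, true_and]
  constructor
  · intro hy
    exact ⟨b, hb, hx, hy⟩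
  · rintro ⟨c, hc, hxc, hyc⟩
    cases P.eq_of_mem_parts hb hc hx hxc
    exact hyc

lemma class_card_even (heven : ∀ b ∈ P.parts, Even b.card) (x : Fin n) :
    Even (Finset.univ.filter (fun y => SameBlock P x y)).card := by
  obtain ⟨b, hb, hxb⟩ := P.exists_mem (Finset.mem_univ x)
  rw [← part_eq_class hb hxb]
  exact heven b hb

/-- if `x` has no block-mate above it, the class of `x` is `belowSet ∪ {x}`. -/
lemma even_cnt_above_nonempty (heven : ∀ b ∈ P.parts, Even b.card) {x : Fin n}
    (hx : Even (cnt P x)) : (aboveSet P x).Nonempty := by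
  by_contra hne
  rw [Finset.not_nonempty_iff_eq_empty] at hne
  have hclass : Finset.univ.filter (fun y => SameBlock P x y) = insert x (belowSet P x) := by
    ext v
    simp only [Finset.mem_filter, Finset.mem_univ, true_and, Finset.mem_insert, mem_belowSet]
    constructor
    · intro hv
      rcases lt_trichotomy v x with h1 | h1 | h1
      · exact Or.inr ⟨hv, h1⟩
      · exact Or.inl h1
      · exfalso
        have : v ∈ aboveSet P x := mem_aboveSet.2 ⟨hv, h1⟩
        simp [hne] at this
    · rintro (rfl | ⟨hv, -⟩)
      · exact sb_refl P v
      · exact hv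
  have hxnb : x ∉ belowSet P x := by
    rw [mem_belowSet]; rintro ⟨-, h⟩; exact lt_irrefl x h
  have := class_card_even heven x
  rw [hclass, Finset.card_insert_of_notMem hxnb] at this
  rw [Nat.even_add_one] at this
  exact this hx

end Basic

section Partner

variable {σ : Finpartition (Finset.univ : Finset (Fin n))}

/-- the partner of `x` in the pairing `σ` -/
noncomputable def sp (σ : Finpartition (Finset.univ : Finset (Fin n))) (x : Fin n) : Fin n :=
  if h : ∃ y, SameBlock σ x y ∧ y ≠ x then h.choose else x

lemma exists_partner (hσpair : ∀ b ∈ σ.parts, b.card = 2) (x : Fin n) :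
    ∃ y, SameBlock σ x y ∧ y ≠ x := by
  obtain ⟨b, hb, hxb⟩ := σ.exists_mem (Finset.mem_univ x)
  obtain ⟨y, hyb, hyx⟩ := Finset.exists_mem_ne (by rw [hσpair b hb]; norm_num) x
  exact ⟨y, ⟨b, hb, hxb, hyb⟩, hyx⟩

lemma partner_unique (hσpair : ∀ b ∈ σ.parts, b.card = 2) {x y y' : Fin n}
    (h : SameBlock σ x y) (hne : y ≠ x) (h' : SameBlock σ x y') (hne' : y' ≠ x) : y = y' := by
  by_contra hyy
  obtain ⟨b, hb, hxb, hyb⟩ := h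
  obtain ⟨c, hc, hxc, hyc⟩ := h'
  cases σ.eq_of_mem_parts hb hc hxb hxc
  have hsub : ({x, y, y'} : Finset (Fin n)) ⊆ b := by
    intro z hz
    simp only [Finset.mem_insert, Finset.mem_singleton] at hz
    rcases hz with rfl | rfl | rfl <;> assumption
  have hcard : ({x, y, y'} : Finset (Fin n)).card = 3 := by
    rw [Finset.card_insert_of_notMem (by simp [Ne.symm hne, Ne.symm hne']),
      Finset.card_insert_of_notMem (by simp [hyy]), Finset.card_singleton]
  have := Finset.card_le_card hsub
  rw [hcard, hσpair b hb] at this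
  omega

lemma sp_spec (hσpair : ∀ b ∈ σ.parts, b.card = 2) (x : Fin n) :
    SameBlock σ x (sp σ x) ∧ sp σ x ≠ x := by
  rw [sp, dif_pos (exists_partner hσpair x)]
  exact (exists_partner hσpair x).choose_spec

lemma sp_eq (hσpair : ∀ b ∈ σ.parts, b.card = 2) {x y : Fin n}
    (h : SameBlock σ x y) (hne : y ≠ x) : y = sp σ x :=
  partner_unique hσpair h hne (sp_spec hσpair x).1 (sp_spec hσpair x).2

end Partner

section Color

variable {P : Finpartition (Finset.univ : Finset (Fin n))} {f : Fin n → Fin k}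

lemma color_lt (hmono : Monotone f)
    (hint : ∀ i j : Fin n, i ≠ j → SameBlock P i j → f i ≠ f j)
    {x y : Fin n} (h : SameBlock P x y) (hxy : x < y) : f x < f y :=
  lt_of_le_of_ne (hmono hxy.le) (hint x y (ne_of_lt hxy) h)

end Color

section QLemmas

variable {π σ : Finpartition (Finset.univ : Finset (Fin n))}

lemma cnt_eq (π : Finpartition (Finset.univ : Finset (Fin n))) (i : Fin n) :
    (Finset.univ.filter (fun x => SameBlock π i x ∧ x < i)).card = cnt π i := rfl

lemma Q1 (hq : QEq π σ) {x y : Fin n} (h : SameBlock σ x y) : SameBlock π x y := by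
  rcases lt_trichotomy x y with h1 | h1 | h1
  · exact ((hq x y h1).mp h).1
  · cases h1; exact sb_refl π x
  · exact sb_symm ((hq y x h1).mp (sb_symm h)).1

lemma Q2 (hq : QEq π σ) {x : Fin n} (hE : Even (cnt π x)) (h : (aboveSet π x).Nonempty) :
    SameBlock σ x (nxt π x h) := by
  refine (hq x (nxt π x h) (nxt_spec h).2).mpr ⟨(nxt_spec h).1, ?_, hE⟩
  exact fun z h1 h2 => nothing_between_nxt h h1 h2

lemma Q3a (hq : QEq π σ) {x y : Fin n} (h : SameBlock σ x y) (hxy : x < y) :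
    Even (cnt π x) :=
  ((hq x y hxy).mp h).2.2

lemma Q3b (hq : QEq π σ) {x y : Fin n} (h : SameBlock σ x y) (hxy : x < y)
    (h' : (aboveSet π x).Nonempty) : nxt π x h' = y := by
  have hπ : SameBlock π x y := ((hq x y hxy).mp h).1
  have hmin := ((hq x y hxy).mp h).2.1
  have h1 : nxt π x h' ≤ y := nxt_min h' hπ hxy
  rcases lt_or_eq_of_le h1 with h2 | h2
  · exact absurd (nxt_spec h').1 (hmin _ (nxt_spec h').2 h2)
  · exact h2

lemma even_iff_sp_gt (hσpair : ∀ b ∈ σ.parts, b.card = 2)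
    (heven : ∀ b ∈ π.parts, Even b.card) (hq : QEq π σ) (x : Fin n) :
    Even (cnt π x) ↔ x < sp σ x := by
  constructor
  · intro hE
    have h := even_cnt_above_nonempty heven hE
    have hs := Q2 hq hE h
    have := sp_eq hσpair hs (ne_of_gt (nxt_spec h).2)
    rw [← this]
    exact (nxt_spec h).2
  · intro hlt
    by_contra hodd
    rw [Nat.not_even_iff_odd] at hodd
    have hb : (belowSet π x).Nonempty := by
      rw [← Finset.card_pos, ← cnt]
      rcases hodd with ⟨m, hm⟩
      omega
    have hEp : Even (cnt π (prv π x hb)) := by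
      rw [cnt_prv hb]
      rcases hodd with ⟨m, hm⟩
      exact ⟨m, by omega⟩
    have h' := above_prv_nonempty hb
    have hs := Q2 hq hEp h'
    rw [nxt_prv hb h'] at hs
    have : prv π x hb = sp σ x :=
      sp_eq hσpair (sb_symm hs) (ne_of_lt (prv_spec hb).2)
    rw [← this] at hlt
    exact absurd hlt (not_lt.2 (prv_spec hb).2.le)

end QLemmas

section Junction

variable {P : Finpartition (Finset.univ : Finset (Fin n))}

lemma junction (hnc : IsNonCrossing P) {x y : Fin n} (hb : SameBlock P x y) (hxy : x < y)
    (hmin : ∀ z, x < z → z < y → ¬ SameBlock P x z) {z w : Fin n}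
    (hz1 : x < z) (hz2 : z < y) (hzw : SameBlock P z w) : x < w ∧ w < y := by
  constructor
  · by_contra hw
    push_neg at hw
    rcases lt_or_eq_of_le hw with h1 | h1
    · have := hnc w x z y h1 hz1 hz2 (sb_symm hzw) hb
      exact hmin z hz1 hz2 (sb_trans (sb_symm this) (sb_symm hzw))
    · cases h1; exact hmin z hz1 hz2 (sb_symm hzw)
  · by_contra hw
    push_neg at hw
    rcases lt_or_eq_of_le hw with h1 | h1
    · have := hnc x z y w hz1 hz2 h1 hb hzw
      exact hmin z hz1 hz2 this
    · cases h1; exact hmin z hz1 hz2 (sb_trans hb (sb_symm hzw))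

lemma key_cross (hnc : IsNonCrossing P) {x y u v u' v' : Fin n}
    (hsb : ¬ SameBlock P x y) (hxy : x < y)
    (hu : SameBlock P x u) (hu1 : u < x)
    (hv : SameBlock P x v) (hv1 : y < v)
    (hu' : SameBlock P y u') (hu'1 : u' < x)
    (hv' : SameBlock P y v') (hv'1 : y < v') : False := by
  have hne : u ≠ u' := by
    rintro rfl
    exact hsb (sb_trans hu (sb_symm hu'))
  rcases lt_or_gt_of_ne hne with h1 | h1
  · have := hnc u u' x y h1 hu'1 hxy (sb_symm hu) (sb_symm hu')
    exact hsb (sb_trans hu (sb_trans this (sb_symm hu')))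
  · have := hnc u' u y v h1 (lt_trans hu1 hxy) hv1 (sb_symm hu') (sb_trans (sb_symm hu) hv)
    exact hsb (sb_trans hu (sb_trans (sb_symm this) (sb_symm hu')))

end Junction

section DsetLemmas

variable {P : Finpartition (Finset.univ : Finset (Fin n))} {f : Fin n → Fin k}

lemma Dset_not_sb (hnc : IsNonCrossing P) (hmono : Monotone f)
    (hint : ∀ i j : Fin n, i ≠ j → SameBlock P i j → f i ≠ f j)
    {x y : Fin n} (hx : x ∈ Dset P) (hy : y ∈ Dset P) (hxy : x < y) (hf : f x = f y) :
    False := by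
  have hsb : ¬ SameBlock P x y := fun h => hint x y (ne_of_lt hxy) h hf
  obtain ⟨⟨u, hu⟩, ⟨v, hv⟩⟩ := mem_Dset.1 hx
  obtain ⟨⟨u', hu'⟩, ⟨v', hv'⟩⟩ := mem_Dset.1 hy
  rw [mem_belowSet] at hu hu'
  rw [mem_aboveSet] at hv hv'
  have hvy : y < v := by
    rcases lt_trichotomy v y with h1 | h1 | h1
    · exfalso
      have hfv : f v = f x := le_antisymm (hf ▸ hmono h1.le) (hmono hv.2.le)
      exact hint x v (ne_of_lt hv.2) hv.1 hfv.symm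
    · exact absurd (h1 ▸ hv.1) hsb
    · exact h1
  have hu'x : u' < x := by
    rcases lt_trichotomy u' x with h1 | h1 | h1
    · exact h1
    · exact absurd (sb_symm (h1 ▸ hu'.1)) hsb
    · exfalso
      have hfu : f u' = f y := le_antisymm (hmono hu'.2.le) (hf ▸ hmono h1.le)
      exact hint y u' (ne_of_gt hu'.2) hu'.1 hfu.symm
  exact key_cross hnc hsb hxy hu.1 hu.2 hv.1 hvy hu'.1 hu'x hv'.1 hv'.2

lemma f_injOn_Dset (hnc : IsNonCrossing P) (hmono : Monotone f)
    (hint : ∀ i j : Fin n, i ≠ j → SameBlock P i j → f i ≠ f j)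
    {x y : Fin n} (hx : x ∈ Dset P) (hy : y ∈ Dset P) (hf : f x = f y) : x = y := by
  rcases lt_trichotomy x y with h1 | h1 | h1
  · exact absurd (Dset_not_sb hnc hmono hint hx hy h1 hf) (by simp)
  · exact h1
  · exact absurd (Dset_not_sb hnc hmono hint hy hx h1 hf.symm) (by simp)

lemma Dset_color_bounds (hmono : Monotone f)
    (hint : ∀ i j : Fin n, i ≠ j → SameBlock P i j → f i ≠ f j)
    {x : Fin n} (hx : x ∈ Dset P) : 0 < (f x).val ∧ (f x).val + 1 < k := by
  obtain ⟨⟨u, hu⟩, ⟨v, hv⟩⟩ := mem_Dset.1 hx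
  rw [mem_belowSet] at hu
  rw [mem_aboveSet] at hv
  have h1 : f u < f x := color_lt hmono hint (sb_symm hu.1) hu.2
  have h2 : f x < f v := color_lt hmono hint hv.1 hv.2
  have := (f v).isLt
  constructor
  · exact lt_of_le_of_lt (Nat.zero_le _) h1
  · omega

end DsetLemmas

section CardBound

variable {P : Finpartition (Finset.univ : Finset (Fin n))} {f : Fin n → Fin k}

lemma Dset_card_le (hk : 2 ≤ k) (hnc : IsNonCrossing P) (hmono : Monotone f)
    (hint : ∀ i j : Fin n, i ≠ j → SameBlock P i j → f i ≠ f j) :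
    (Dset P).card ≤ k - 2 := by
  have hzk : 0 < k := by omega
  have hlk : k - 1 < k := by omega
  have hinj : Set.InjOn f (Dset P) := fun x hx y hy hf =>
    f_injOn_Dset hnc hmono hint (by simpa using hx) (by simpa using hy) hf
  rw [← Finset.card_image_of_injOn hinj]
  have hsub : (Dset P).image f ⊆
      ((Finset.univ : Finset (Fin k)).erase ⟨0, hzk⟩).erase ⟨k - 1, hlk⟩ := by
    intro a ha
    obtain ⟨x, hx, rfl⟩ := Finset.mem_image.1 ha
    obtain ⟨h1, h2⟩ := Dset_color_bounds hmono hint hx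
    rw [Finset.mem_erase, Finset.mem_erase]
    refine ⟨?_, ?_, Finset.mem_univ _⟩
    · intro h; rw [Fin.ext_iff] at h; simp at h; omega
    · intro h; rw [Fin.ext_iff] at h; simp at h; omega
  have hcard : (((Finset.univ : Finset (Fin k)).erase ⟨0, hzk⟩).erase ⟨k - 1, hlk⟩).card
      = k - 2 := by
    rw [Finset.card_erase_of_mem, Finset.card_erase_of_mem (Finset.mem_univ _)]
    · simp; omega
    · rw [Finset.mem_erase]
      refine ⟨?_, Finset.mem_univ _⟩
      intro h; rw [Fin.ext_iff] at h; simp at h; omega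
  calc ((Dset P).image f).card ≤ _ := Finset.card_le_card hsub
    _ = k - 2 := hcard

noncomputable def intr (b : Finset (Fin n)) : Finset (Fin n) :=
  b.filter (fun x => (∃ u ∈ b, u < x) ∧ (∃ v ∈ b, x < v))

lemma intr_card (hb : b.Nonempty) (h4 : 4 ≤ b.card) : b.card ≤ 2 * (intr b).card := by
  have hsub : b ⊆ insert (b.min' hb) (insert (b.max' hb) (intr b)) := by
    intro x hx
    simp only [Finset.mem_insert]
    by_cases h1 : ∃ u ∈ b, u < x
    · by_cases h2 : ∃ v ∈ b, x < v
      · exact Or.inr (Or.inr (Finset.mem_filter.2 ⟨hx, h1, h2⟩))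
      · push_neg at h2
        exact Or.inr (Or.inl (le_antisymm (Finset.le_max' b x hx) (h2 _ (b.max'_mem hb))))
    · push_neg at h1
      exact Or.inl (le_antisymm (h1 _ (b.min'_mem hb)) (Finset.min'_le b x hx))
  have h5 := Finset.card_le_card hsub
  have h6 := Finset.card_insert_le (b.min' hb) (insert (b.max' hb) (intr b))
  have h7 := Finset.card_insert_le (b.max' hb) (intr b)
  omega

lemma Dset_eq_biUnion (P : Finpartition (Finset.univ : Finset (Fin n))) :
    Dset P = P.parts.biUnion intr := by
  ext x
  rw [mem_Dset, Finset.mem_biUnion]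
  constructor
  · rintro ⟨⟨u, hu⟩, ⟨v, hv⟩⟩
    rw [mem_belowSet] at hu
    rw [mem_aboveSet] at hv
    obtain ⟨b, hb, hxb⟩ := P.exists_mem (Finset.mem_univ x)
    refine ⟨b, hb, Finset.mem_filter.2 ⟨hxb, ⟨u, ?_, hu.2⟩, ⟨v, ?_, hv.2⟩⟩⟩
    · obtain ⟨c, hc, hxc, huc⟩ := hu.1
      cases P.eq_of_mem_parts hb hc hxb hxc
      exact huc
    · obtain ⟨c, hc, hxc, hvc⟩ := hv.1
      cases P.eq_of_mem_parts hb hc hxb hxc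
      exact hvc
  · rintro ⟨b, hb, hx⟩
    obtain ⟨hxb, ⟨u, hub, hu⟩, ⟨v, hvb, hv⟩⟩ := Finset.mem_filter.1 hx
    exact ⟨⟨u, mem_belowSet.2 ⟨⟨b, hb, hxb, hub⟩, hu⟩⟩,
      ⟨v, mem_aboveSet.2 ⟨⟨b, hb, hxb, hvb⟩, hv⟩⟩⟩

lemma goal2 (hk : 2 ≤ k) (hnc : IsNonCrossing P)
    (heven : ∀ b ∈ P.parts, Even b.card) (hmono : Monotone f)
    (hint : ∀ i j : Fin n, i ≠ j → SameBlock P i j → f i ≠ f j) :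
    (Finset.univ.filter (fun x : Fin n =>
      ∃ b ∈ P.parts, x ∈ b ∧ b.card ≠ 2)).card ≤ 2 * k - 4 := by
  classical
  set P2 := P.parts.filter (fun b => b.card ≠ 2) with hP2
  have hdisj : ∀ b ∈ P2, ∀ c ∈ P2, b ≠ c → Disjoint b c := by
    intro b hb c hc hbc
    exact P.disjoint (Finset.mem_coe.2 (Finset.mem_of_mem_filter b hb))
      (Finset.mem_coe.2 (Finset.mem_of_mem_filter c hc)) hbc
  have hE : Finset.univ.filter (fun x : Fin n => ∃ b ∈ P.parts, x ∈ b ∧ b.card ≠ 2)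
      = P2.biUnion (fun b => b) := by
    ext x
    simp only [Finset.mem_filter, Finset.mem_univ, true_and, Finset.mem_biUnion, hP2]
    constructor
    · rintro ⟨b, hb, hxb, hb2⟩
      exact ⟨b, ⟨hb, hb2⟩, hxb⟩
    · rintro ⟨b, ⟨hb, hb2⟩, hxb⟩
      exact ⟨b, hb, hxb, hb2⟩
  rw [hE, Finset.card_biUnion hdisj]
  have hDcard : (Dset P).card = ∑ b ∈ P.parts, (intr b).card := by
    rw [Dset_eq_biUnion P, Finset.card_biUnion]
    intro b hb c hc hbc
    exact Disjoint.mono (Finset.filter_subset _ _) (Finset.filter_subset _ _)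
      (P.disjoint (Finset.mem_coe.2 hb) (Finset.mem_coe.2 hc) hbc)
  have hstep : ∑ b ∈ P2, b.card ≤ 2 * ∑ b ∈ P.parts, (intr b).card := by
    calc ∑ b ∈ P2, b.card ≤ ∑ b ∈ P2, 2 * (intr b).card := by
          apply Finset.sum_le_sum
          intro b hb
          obtain ⟨hbp, hb2⟩ := Finset.mem_filter.1 hb
          have hbne := P.nonempty_of_mem_parts hbp
          have hbe := heven b hbp
          have h4 : 4 ≤ b.card := by
            rcases hbe with ⟨m, hm⟩
            have := Finset.card_pos.2 hbne
            omega
          exact intr_card hbne h4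
      _ = 2 * ∑ b ∈ P2, (intr b).card := by rw [Finset.mul_sum]
      _ ≤ 2 * ∑ b ∈ P.parts, (intr b).card := by
          apply Nat.mul_le_mul_left
          apply Finset.sum_le_sum_of_subset (Finset.filter_subset _ _)
  have hDk := Dset_card_le hk hnc hmono hint
  omega

end CardBound

section Descent

variable {σ π π' : Finpartition (Finset.univ : Finset (Fin n))}

lemma below_nonempty_of_odd {x : Fin n} (h : Odd (cnt π x)) : (belowSet π x).Nonempty := by
  rw [← Finset.card_pos, ← cnt]
  rcases h with ⟨m, hm⟩
  omega

lemma odd_sp_lt (hσpair : ∀ b ∈ σ.parts, b.card = 2)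
    (heven : ∀ b ∈ π.parts, Even b.card) (hq : QEq π σ) {x : Fin n}
    (h : Odd (cnt π x)) : sp σ x < x := by
  have h1 : ¬ x < sp σ x := by
    rw [← even_iff_sp_gt hσpair heven hq, ← Nat.not_odd_iff_even]
    simpa using h
  rcases lt_or_eq_of_le (not_lt.1 h1) with h2 | h2
  · exact h2
  · exact absurd h2 (sp_spec hσpair x).2

lemma core (hσpair : ∀ b ∈ σ.parts, b.card = 2)
    (hnc : IsNonCrossing π) (heven : ∀ b ∈ π.parts, Even b.card) (hq : QEq π σ)
    (hnc' : IsNonCrossing π') (heven' : ∀ b ∈ π'.parts, Even b.card) (hq' : QEq π' σ)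
    (hD : Dset π = Dset π') :
    ∀ c : ℕ, ∀ x : Fin n, x ∈ Dset π → sp σ x < x →
      ∀ (h1 : (aboveSet π x).Nonempty) (h2 : (aboveSet π' x).Nonempty),
      (nxt π x h1).val = c → nxt π' x h2 ≤ nxt π x h1 := by
  intro c
  induction c using Nat.strong_induction_on with
  | _ c IH =>
    intro x hx hside h1 h2 hc
    by_contra hgt
    push_neg at hgt
    -- `c'' := nxt π x h1 < c''' := nxt π' x h2`
    have hoddx : Odd (cnt π x) := by
      rw [← Nat.not_even_iff_odd, even_iff_sp_gt hσpair heven hq]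
      exact not_lt.2 hside.le
    have hEc'' : Even (cnt π (nxt π x h1)) := by
      rw [cnt_nxt h1, Nat.even_add_one, Nat.not_even_iff_odd]
      exact hoddx
    have hc''D : nxt π x h1 ∈ Dset π := by
      rw [mem_Dset]
      refine ⟨⟨x, mem_belowSet.2 ⟨sb_symm (nxt_spec h1).1, (nxt_spec h1).2⟩⟩, ?_⟩
      exact even_cnt_above_nonempty heven hEc''
    have hc''D' : nxt π x h1 ∈ Dset π' := hD ▸ hc''D
    have hsidec'' : nxt π x h1 < sp σ (nxt π x h1) :=
      (even_iff_sp_gt hσpair heven hq _).mp hEc''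
    have hEc''' : Even (cnt π' (nxt π x h1)) :=
      (even_iff_sp_gt hσpair heven' hq' _).mpr hsidec''
    have hbel : (belowSet π' (nxt π x h1)).Nonempty := (mem_Dset.1 hc''D').1
    set e' := prv π' (nxt π x h1) hbel with he'
    have he'spec := prv_spec hbel
    have hodde' : Odd (cnt π' e') := by
      rw [he', cnt_prv hbel, ← Nat.not_even_iff_odd]
      intro hEe'
      have h0 : 0 < cnt π' (nxt π x h1) := Finset.card_pos.2 hbel
      rcases hEc''' with ⟨m, hm⟩
      rcases hEe' with ⟨m', hm'⟩
      omega
    -- junction closure in π' between x and nxt π' x h2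
    have hjunc' := junction hnc' (nxt_spec h2).1 (nxt_spec h2).2
      (fun z hz1 hz2 => nothing_between_nxt h2 hz1 hz2) (nxt_spec h1).2 hgt
      he'spec.1
    -- `x < e' < nxt π x h1`
    have he'x : x < e' := hjunc'.1
    have he'D' : e' ∈ Dset π' := by
      rw [mem_Dset]
      exact ⟨below_nonempty_of_odd hodde',
        ⟨nxt π x h1, mem_aboveSet.2 ⟨sb_symm he'spec.1, he'spec.2⟩⟩⟩
    have he'D : e' ∈ Dset π := hD ▸ he'D'
    have hsidee' : sp σ e' < e' := odd_sp_lt hσpair heven' hq' hodde'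
    have h2e' : (aboveSet π' e').Nonempty :=
      ⟨nxt π x h1, mem_aboveSet.2 ⟨sb_symm he'spec.1, he'spec.2⟩⟩
    have hnxte' : nxt π' e' h2e' = nxt π x h1 := nxt_prv hbel h2e'
    have h1e' : (aboveSet π e').Nonempty := (mem_Dset.1 he'D).2
    -- junction closure in π between x and nxt π x h1
    have hjunc := junction hnc (nxt_spec h1).1 (nxt_spec h1).2
      (fun z hz1 hz2 => nothing_between_nxt h1 hz1 hz2) he'x he'spec.2
      (nxt_spec h1e').1
    have hz : nxt π e' h1e' < nxt π x h1 := hjunc.2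
    have hIH := IH (nxt π e' h1e').val (by rw [← hc]; exact hz) e' he'D hsidee' h1e' h2e' rfl
    rw [hnxte'] at hIH
    exact absurd (lt_of_le_of_lt hIH hz) (lt_irrefl _)

lemma nxt_eq_of_Dset_eq (hσpair : ∀ b ∈ σ.parts, b.card = 2)
    (hnc : IsNonCrossing π) (heven : ∀ b ∈ π.parts, Even b.card) (hq : QEq π σ)
    (hnc' : IsNonCrossing π') (heven' : ∀ b ∈ π'.parts, Even b.card) (hq' : QEq π' σ)
    (hD : Dset π = Dset π') {x : Fin n} (hside : sp σ x < x)
    (h1 : (aboveSet π x).Nonempty) (h2 : (aboveSet π' x).Nonempty) (hx : x ∈ Dset π) :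
    nxt π x h1 = nxt π' x h2 := by
  apply le_antisymm
  · exact core hσpair hnc' heven' hq' hnc heven hq hD.symm (nxt π' x h2).val x
      (hD ▸ hx) hside h2 h1 rfl
  · exact core hσpair hnc heven hq hnc' heven' hq' hD (nxt π x h1).val x hx hside h1 h2 rfl

lemma sb_imp_of_Dset_eq (hσpair : ∀ b ∈ σ.parts, b.card = 2)
    (hnc : IsNonCrossing π) (heven : ∀ b ∈ π.parts, Even b.card) (hq : QEq π σ)
    (hnc' : IsNonCrossing π') (heven' : ∀ b ∈ π'.parts, Even b.card) (hq' : QEq π' σ)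
    (hD : Dset π = Dset π') :
    ∀ d : ℕ, ∀ x y : Fin n, x < y → y.val - x.val = d → SameBlock π x y →
      SameBlock π' x y := by
  intro d
  induction d using Nat.strong_induction_on with
  | _ d IH =>
    intro x y hxy hd hsb
    have h1 : (aboveSet π x).Nonempty := ⟨y, mem_aboveSet.2 ⟨hsb, hxy⟩⟩
    have hz := nxt_spec h1
    have hzy : nxt π x h1 ≤ y := nxt_min h1 hsb hxy
    have hπ' : SameBlock π' x (nxt π x h1) := by
      by_cases hE : Even (cnt π x)
      · exact Q1 hq' (Q2 hq hE h1)
      · rw [Nat.not_even_iff_odd] at hE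
        have hxD : x ∈ Dset π :=
          mem_Dset.2 ⟨below_nonempty_of_odd hE, h1⟩
        have h2 : (aboveSet π' x).Nonempty := (mem_Dset.1 (hD ▸ hxD)).2
        have := nxt_eq_of_Dset_eq hσpair hnc heven hq hnc' heven' hq' hD
          (odd_sp_lt hσpair heven hq hE) h1 h2 hxD
        rw [this]
        exact (nxt_spec h2).1
    rcases lt_or_eq_of_le hzy with h3 | h3
    · have hzb : SameBlock π (nxt π x h1) y := sb_trans (sb_symm hz.1) hsb
      have : SameBlock π' (nxt π x h1) y := by
        apply IH (y.val - (nxt π x h1).val) _ _ _ h3 rfl hzb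
        have := hz.2
        omega
      exact sb_trans hπ' this
    · rwa [h3] at hπ'

lemma eq_of_Dset_eq (hσpair : ∀ b ∈ σ.parts, b.card = 2)
    (hnc : IsNonCrossing π) (heven : ∀ b ∈ π.parts, Even b.card) (hq : QEq π σ)
    (hnc' : IsNonCrossing π') (heven' : ∀ b ∈ π'.parts, Even b.card) (hq' : QEq π' σ)
    (hD : Dset π = Dset π') : π = π' := by
  have hsb : ∀ x y : Fin n, SameBlock π x y ↔ SameBlock π' x y := by
    have himp : ∀ (ρ ρ' : Finpartition (Finset.univ : Finset (Fin n))),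
        IsNonCrossing ρ → (∀ b ∈ ρ.parts, Even b.card) → QEq ρ σ →
        IsNonCrossing ρ' → (∀ b ∈ ρ'.parts, Even b.card) → QEq ρ' σ →
        Dset ρ = Dset ρ' → ∀ x y : Fin n, SameBlock ρ x y → SameBlock ρ' x y := by
      intro ρ ρ' a1 a2 a3 b1 b2 b3 hDD x y hxy
      rcases lt_trichotomy x y with h | h | h
      · exact sb_imp_of_Dset_eq hσpair a1 a2 a3 b1 b2 b3 hDD _ x y h rfl hxy
      · cases h; exact sb_refl ρ' x
      · exact sb_symm (sb_imp_of_Dset_eq hσpair a1 a2 a3 b1 b2 b3 hDD _ y x h rfl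
          (sb_symm hxy))
    intro x y
    exact ⟨himp π π' hnc heven hq hnc' heven' hq' hD x y,
      himp π' π hnc' heven' hq' hnc heven hq hD.symm x y⟩
  apply Finpartition.ext
  have hparts : ∀ (ρ ρ' : Finpartition (Finset.univ : Finset (Fin n))),
      (∀ x y : Fin n, SameBlock ρ x y ↔ SameBlock ρ' x y) → ρ.parts ⊆ ρ'.parts := by
    intro ρ ρ' hρ b hb
    obtain ⟨x, hxb⟩ := ρ.nonempty_of_mem_parts hb
    obtain ⟨b', hb', hxb'⟩ := ρ'.exists_mem (Finset.mem_univ x)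
    have : b = b' := by
      rw [part_eq_class hb hxb, part_eq_class hb' hxb']
      ext y
      simp only [Finset.mem_filter, Finset.mem_univ, true_and]
      exact hρ x y
    rw [this]
    exact hb'
  apply Finset.Subset.antisymm
  · exact hparts π π' hsb
  · exact hparts π' π (fun x y => (hsb x y).symm)

end Descent

section Encoding

variable {σ π π' : Finpartition (Finset.univ : Finset (Fin n))} {f : Fin n → Fin k}

lemma aux_discrep (hσnc : IsNonCrossing σ) (hσpair : ∀ b ∈ σ.parts, b.card = 2)
    (hmono : Monotone f)
    (hnc : IsNonCrossing π) (heven : ∀ b ∈ π.parts, Even b.card)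
    (hint : ∀ i j : Fin n, i ≠ j → SameBlock π i j → f i ≠ f j) (hq : QEq π σ)
    (hnc' : IsNonCrossing π') (heven' : ∀ b ∈ π'.parts, Even b.card)
    (hint' : ∀ i j : Fin n, i ≠ j → SameBlock π' i j → f i ≠ f j) (hq' : QEq π' σ)
    {x x' : Fin n}
    (hx : x ∈ Dset π) (hxn : x ∉ Dset π')
    (hx' : x' ∈ Dset π') (hx'n : x' ∉ Dset π)
    (hf : f x = f x') (hlt : x < x')
    (hside : (x < sp σ x) ↔ (x' < sp σ x')) : False := by
  have hspx := sp_spec hσpair x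
  have hspx' := sp_spec hσpair x'
  have hne : x ≠ x' := ne_of_lt hlt
  have hnsb : ¬ SameBlock π x x' := fun h => hint x x' hne h hf
  have hnsb' : ¬ SameBlock π' x x' := fun h => hint' x x' hne h hf
  by_cases hL : x < sp σ x
  · -- both pairs open to the right
    have hL' : x' < sp σ x' := hside.mp hL
    have l1 : x' < sp σ x := by
      rcases lt_trichotomy (sp σ x) x' with h1 | h1 | h1
      · exfalso
        have hfs : f (sp σ x) = f x := le_antisymm (hf ▸ hmono h1.le) (hmono hL.le)
        exact hint x (sp σ x) (ne_of_lt hL) (Q1 hq hspx.1) hfs.symm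
      · exact absurd (h1 ▸ Q1 hq hspx.1) hnsb
      · exact h1
    have l2 : sp σ x' < sp σ x := by
      rcases lt_trichotomy (sp σ x) (sp σ x') with h1 | h1 | h1
      · exfalso
        have := hσnc x x' (sp σ x) (sp σ x') hlt l1 h1 hspx.1 hspx'.1
        exact hnsb (Q1 hq this)
      · exfalso
        have hxx : SameBlock σ (sp σ x) x' := by rw [h1]; exact sb_symm hspx'.1
        have hne'' : x' ≠ sp σ x := by rw [h1]; exact ne_of_lt hL'
        have : x = x' := partner_unique hσpair (sb_symm hspx.1) (ne_of_lt hL)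
          hxx hne''
        exact hne this
      · exact h1
    have hbel' : (belowSet π' x').Nonempty := (mem_Dset.1 hx').1
    have he := prv_spec hbel'
    have l4 : prv π' x' hbel' < x := by
      rcases lt_trichotomy (prv π' x' hbel') x with h1 | h1 | h1
      · exact h1
      · exfalso
        -- then x would be an interior element of the π'-block of x'
        have hsb : SameBlock π' x x' := sb_symm (h1 ▸ he.1)
        apply hxn
        rw [mem_Dset]
        constructor
        · apply below_nonempty_of_odd
          have hcx : cnt π' x = cnt π' x' - 1 := by rw [← h1]; exact cnt_prv hbel'
          have hEx' : Even (cnt π' x') := (even_iff_sp_gt hσpair heven' hq' x').mpr hL'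
          have h0 : 0 < cnt π' x' := Finset.card_pos.2 hbel'
          rcases hEx' with ⟨m, hm⟩
          rw [Nat.odd_iff]
          omega
        · exact ⟨x', mem_aboveSet.2 ⟨hsb, hlt⟩⟩
      · exfalso
        have hfe : f (prv π' x' hbel') = f x' :=
          le_antisymm (hmono he.2.le) (hf ▸ hmono h1.le)
        exact hint' x' (prv π' x' hbel') (ne_of_gt he.2) he.1 hfe.symm
    have := hnc' (prv π' x' hbel') x x' (sp σ x) l4 hlt l1 (sb_symm he.1) (Q1 hq' hspx.1)
    exact hnsb' (sb_trans (sb_symm this) (sb_symm he.1))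
  · -- both pairs open to the left
    have hR : sp σ x < x := by
      rcases lt_or_eq_of_le (not_lt.1 hL) with h | h
      · exact h
      · exact absurd h (sp_spec hσpair x).2
    have hR' : sp σ x' < x' := by
      have : ¬ x' < sp σ x' := fun h => hL (hside.mpr h)
      rcases lt_or_eq_of_le (not_lt.1 this) with h | h
      · exact h
      · exact absurd h (sp_spec hσpair x').2
    have r3 : sp σ x' < x := by
      rcases lt_trichotomy (sp σ x') x with h1 | h1 | h1
      · exact h1
      · exact absurd (sb_symm (h1 ▸ Q1 hq hspx'.1)) hnsb
      · exfalso
        have hfs : f (sp σ x') = f x' := le_antisymm (hmono hR'.le) (hf ▸ hmono h1.le)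
        exact hint' x' (sp σ x') (ne_of_gt hR') (Q1 hq' hspx'.1) hfs.symm
    have r3' : sp σ x' < sp σ x := by
      rcases lt_trichotomy (sp σ x) (sp σ x') with h1 | h1 | h1
      · exfalso
        have := hσnc (sp σ x) (sp σ x') x x' h1 r3 hlt (sb_symm hspx.1) (sb_symm hspx'.1)
        have hxeq : x = sp σ x' := partner_unique hσpair (sb_symm hspx.1)
          (ne_of_lt hR).symm this (ne_of_lt h1).symm
        exact absurd (hxeq ▸ r3) (lt_irrefl x)
      · exfalso
        have hxx : SameBlock σ (sp σ x) x' := by rw [h1]; exact sb_symm hspx'.1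
        have hne'' : x' ≠ sp σ x := by rw [h1]; exact ne_of_gt hR'
        have : x = x' := partner_unique hσpair (sb_symm hspx.1) (ne_of_gt hR)
          hxx hne''
        exact hne this
      · exact h1
    have h1 : (aboveSet π x).Nonempty := (mem_Dset.1 hx).2
    have hc := nxt_spec h1
    have r5 : nxt π x h1 < x' := by
      rcases lt_trichotomy (nxt π x h1) x' with h2 | h2 | h2
      · exact h2
      · exact absurd (h2 ▸ hc.1) hnsb
      · exfalso
        have := hnc (sp σ x') (sp σ x) x' (nxt π x h1) r3' (lt_trans hR hlt) h2
          (Q1 hq (sb_symm hspx'.1)) (sb_trans (sb_symm (Q1 hq hspx.1)) hc.1)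
        exact hnsb (sb_trans (sb_trans (Q1 hq hspx.1) (sb_symm this))
          (sb_symm (Q1 hq hspx'.1)))
    have hfc : f (nxt π x h1) = f x := le_antisymm (hf ▸ hmono r5.le) (hmono hc.2.le)
    exact hint x (nxt π x h1) (ne_of_lt hc.2) hc.1 hfc.symm

/-- the encoding map -/
noncomputable def phi (σ : Finpartition (Finset.univ : Finset (Fin n)))
    (f : Fin n → Fin k) (π : Finpartition (Finset.univ : Finset (Fin n))) :
    Fin (k - 2) → Option Bool :=
  fun b =>
    if h : ∃ x, x ∈ Dset π ∧ (f x).val = b.val + 1 then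
      some (decide (h.choose < sp σ h.choose))
    else none

lemma phi_spec (hnc : IsNonCrossing π) (hmono : Monotone f)
    (hint : ∀ i j : Fin n, i ≠ j → SameBlock π i j → f i ≠ f j)
    {x : Fin n} (hx : x ∈ Dset π) {b : Fin (k - 2)} (hb : (f x).val = b.val + 1) :
    phi σ f π b = some (decide (x < sp σ x)) := by
  have h : ∃ y, y ∈ Dset π ∧ (f y).val = b.val + 1 := ⟨x, hx, hb⟩
  have hxeq : h.choose = x := by
    apply f_injOn_Dset hnc hmono hint h.choose_spec.1 hx
    have := h.choose_spec.2
    rw [Fin.ext_iff]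
    omega
  rw [phi, dif_pos h, hxeq]

lemma aux2 (hσnc : IsNonCrossing σ) (hσpair : ∀ b ∈ σ.parts, b.card = 2)
    (hmono : Monotone f)
    (hnc : IsNonCrossing π) (heven : ∀ b ∈ π.parts, Even b.card)
    (hint : ∀ i j : Fin n, i ≠ j → SameBlock π i j → f i ≠ f j) (hq : QEq π σ)
    (hnc' : IsNonCrossing π') (heven' : ∀ b ∈ π'.parts, Even b.card)
    (hint' : ∀ i j : Fin n, i ≠ j → SameBlock π' i j → f i ≠ f j) (hq' : QEq π' σ)
    (hphi : phi σ f π = phi σ f π')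
    {x : Fin n} (hx : x ∈ Dset π) (hxn : x ∉ Dset π') : False := by
  obtain ⟨hb1, hb2⟩ := Dset_color_bounds hmono hint hx
  have hblt : (f x).val - 1 < k - 2 := by omega
  set b : Fin (k - 2) := ⟨(f x).val - 1, hblt⟩ with hbdef
  have hbx : (f x).val = b.val + 1 := by rw [hbdef]; simp; omega
  have h1 := phi_spec (σ := σ) hnc hmono hint hx hbx
  rw [hphi] at h1
  -- extract the witness on the `π'` side
  have h2 : ∃ y, y ∈ Dset π' ∧ (f y).val = b.val + 1 := by
    by_contra h2
    rw [phi, dif_neg h2] at h1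
    cases h1
  set x' := h2.choose with hx'def
  obtain ⟨hx'D, hx'f⟩ := h2.choose_spec
  rw [← hx'def] at hx'D hx'f
  rw [phi, dif_pos h2] at h1
  have hside : (x' < sp σ x') ↔ (x < sp σ x) := by
    have := Option.some_injective _ h1.symm
    rw [← hx'def] at this
    exact decide_eq_decide.mp this.symm
  have hff : f x = f x' := by rw [Fin.ext_iff]; omega
  have hx'nD : x' ∉ Dset π := by
    intro hmem
    have : x' = x := f_injOn_Dset hnc hmono hint hmem hx hff.symm
    exact hxn (this ▸ hx'D)
  have hnexx' : x ≠ x' := by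
    intro h
    exact hxn (h ▸ hx'D)
  rcases lt_trichotomy x x' with h3 | h3 | h3
  · exact aux_discrep hσnc hσpair hmono hnc heven hint hq hnc' heven' hint' hq'
      hx hxn hx'D hx'nD hff h3 hside.symm
  · exact hnexx' h3
  · exact aux_discrep hσnc hσpair hmono hnc' heven' hint' hq' hnc heven hint hq
      hx'D hx'nD hx hxn hff.symm h3 hside

lemma Dset_eq_of_phi_eq (hσnc : IsNonCrossing σ) (hσpair : ∀ b ∈ σ.parts, b.card = 2)
    (hmono : Monotone f)
    (hnc : IsNonCrossing π) (heven : ∀ b ∈ π.parts, Even b.card)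
    (hint : ∀ i j : Fin n, i ≠ j → SameBlock π i j → f i ≠ f j) (hq : QEq π σ)
    (hnc' : IsNonCrossing π') (heven' : ∀ b ∈ π'.parts, Even b.card)
    (hint' : ∀ i j : Fin n, i ≠ j → SameBlock π' i j → f i ≠ f j) (hq' : QEq π' σ)
    (hphi : phi σ f π = phi σ f π') : Dset π = Dset π' := by
  by_contra hne
  have : ¬ ∀ x, (x ∈ Dset π ↔ x ∈ Dset π') := fun h => hne (Finset.ext h)
  push_neg at this
  obtain ⟨x, hx⟩ := this
  rcases hx with ⟨h1, h2⟩ | ⟨h1, h2⟩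
  · exact aux2 hσnc hσpair hmono hnc heven hint hq hnc' heven' hint' hq' hphi h1 h2
  · exact aux2 hσnc hσpair hmono hnc' heven' hint' hq' hnc heven hint hq hphi.symm h2 h1

end Encoding

end FiberProof

open FiberProof

/-- Suppose `[2N]` is divided into `k ≥ 2` non-empty consecutive intervals (given by a
monotone surjection `f` onto `Fin k`), and `σ` is a non-crossing pair partition whose
pairs never connect two elements of a same interval.  Then at most `4^{k−2}`
non-crossing partitions `π` of `[2N]` with blocks of even size, connecting no two
elements of a same interval, satisfy `Q(π) = σ`; and for each such `π` at most
`2k − 4` elements lie in a block of `π` that is not a pair. -/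
theorem fiber_of_Q_bound (N k : ℕ) (hN : 0 < N) (hk : 2 ≤ k)
    (f : Fin (2 * N) → Fin k) (hfmono : Monotone f) (hfsurj : Function.Surjective f)
    (σ : Finpartition (Finset.univ : Finset (Fin (2 * N))))
    (hσnc : IsNonCrossing σ) (hσpair : ∀ b ∈ σ.parts, b.card = 2)
    (hσint : ∀ i j : Fin (2 * N), i ≠ j → SameBlock σ i j → f i ≠ f j) :
    Nat.card {π : Finpartition (Finset.univ : Finset (Fin (2 * N))) //
        IsNonCrossing π ∧ (∀ b ∈ π.parts, Even b.card) ∧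
        (∀ i j : Fin (2 * N), i ≠ j → SameBlock π i j → f i ≠ f j) ∧
        QEq π σ} ≤ 4 ^ (k - 2) ∧
      ∀ π : Finpartition (Finset.univ : Finset (Fin (2 * N))),
        IsNonCrossing π → (∀ b ∈ π.parts, Even b.card) →
        (∀ i j : Fin (2 * N), i ≠ j → SameBlock π i j → f i ≠ f j) →
        QEq π σ →
        (Finset.univ.filter (fun x : Fin (2 * N) =>
            ∃ b ∈ π.parts, x ∈ b ∧ b.card ≠ 2)).card ≤ 2 * k - 4 := by
  constructor
  · have hFinj : Function.Injective
        (fun p : {π : Finpartition (Finset.univ : Finset (Fin (2 * N))) //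
            IsNonCrossing π ∧ (∀ b ∈ π.parts, Even b.card) ∧
            (∀ i j : Fin (2 * N), i ≠ j → SameBlock π i j → f i ≠ f j) ∧
            QEq π σ} => phi σ f p.val) := by
      rintro ⟨π, h1, h2, h3, h4⟩ ⟨π', h1', h2', h3', h4'⟩ hF
      simp only at hF
      apply Subtype.ext
      apply eq_of_Dset_eq hσpair h1 h2 h4 h1' h2' h4'
      exact Dset_eq_of_phi_eq hσnc hσpair hfmono h1 h2 h3 h4 h1' h2' h3' h4' hF
    calc Nat.card _ ≤ Nat.card (Fin (k - 2) → Option Bool) :=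
          Nat.card_le_card_of_injective _ hFinj
      _ = 3 ^ (k - 2) := by
          rw [Nat.card_eq_fintype_card, Fintype.card_fun]
          simp
      _ ≤ 4 ^ (k - 2) := Nat.pow_le_pow_left (by norm_num) _
  · intro π h1 h2 h3 h4
    exact goal2 hk h1 h2 hfmono h3
end
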